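/- arXiv:1812.11789 — 7 statements merged into one kernel-verified Lean document; each statement's English description precedes it below -/
import Mathlib

section
/- Let K be a field of characteristic zero, m, n, d natural numbers with 0 ≤ d < min(m,n), and define y(x) = ∑_{j=0}^{d} C(n-d+j-1, j) · C(m-j-1, d-j) · (x-α)^j · (x-β)^(d-j) in K[x], for α, β ∈ K. Then y satisfies the differential equation (x-α)(x-β)·y'' + (α(n-1) + β(m-1) - (m+n-2)x)·y' + d(m+n-d-1)·y = 0. -/
open Polynomial

set_option maxHeartbeats 1000000 in
lemma jstep {K : Type*} [Field K] (α β M N : K) (j k : ℕ) :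
    (X - C α) * (X - C β) * derivative (derivative ((X - C α)^j * (X - C β)^k)) +
      (C (α * (N - 1) + β * (M - 1)) - C (M + N - 2) * X) *
        derivative ((X - C α)^j * (X - C β)^k) +
      C (((j:K) + (k:K)) * (M + N - ((j:K) + (k:K)) - 1)) * ((X - C α)^j * (X - C β)^k)
    = C ((j:K) * ((j:K) - M)) * ((X - C α)^(j-1) * (X - C β)^(k+1))
      + C ((N - (k:K)) * (k:K) + (j:K) * (M - (j:K))) * ((X - C α)^j * (X - C β)^k)
      + C ((k:K) * ((k:K) - N)) * ((X - C α)^(j+1) * (X - C β)^(k-1)) := by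
  match j, k with
  | 0, 0 => simp [derivative_mul, map_ofNat]; try ring
  | 0, 1 => simp [derivative_mul, map_ofNat]; try ring
  | 0, k+2 => simp [derivative_mul, derivative_pow, map_ofNat]; try ring
  | 1, 0 => simp [derivative_mul, map_ofNat]; try ring
  | 1, 1 => simp [derivative_mul, map_ofNat]; try ring
  | 1, k+2 => simp [derivative_mul, derivative_pow, map_ofNat]; try ring
  | j+2, 0 => simp [derivative_mul, derivative_pow, map_ofNat]; try ring
  | j+2, 1 => simp [derivative_mul, derivative_pow, map_ofNat]; try ring
  | j+2, k+2 => simp [derivative_mul, derivative_pow, map_ofNat]; try ring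

lemma jnat (m n d i : ℕ) (hm : d < m) (hn : d < n) (hi : i < d) :
    (Nat.choose (n - d + (i+1) - 1) (i+1) * Nat.choose (m - (i+1) - 1) (d - (i+1))) *
      ((i+1) * (m - i - 1))
    = (Nat.choose (n - d + i - 1) i * Nat.choose (m - i - 1) (d - i)) *
      ((n - d + i) * (d - i)) := by
  have h1 : (n - d + i - 1) + 1 = n - d + i := by omega
  have h2 : (m - i - 2) + 1 = m - i - 1 := by omega
  have h3 : (d - i - 1) + 1 = d - i := by omega
  have e1 := Nat.add_one_mul_choose_eq (n - d + i - 1) i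
  have e2 := Nat.add_one_mul_choose_eq (m - i - 2) (d - i - 1)
  simp only [Nat.succ_eq_add_one, h1] at e1
  simp only [Nat.succ_eq_add_one, h2, h3] at e2
  have h4 : n - d + (i+1) - 1 = n - d + i := by omega
  have h5 : m - (i+1) - 1 = m - i - 2 := by omega
  have h6 : d - (i+1) = d - i - 1 := by omega
  rw [h4, h5, h6]
  calc (Nat.choose (n - d + i) (i+1) * Nat.choose (m - i - 2) (d - i - 1)) * ((i+1) * (m - i - 1))
      = (Nat.choose (n - d + i) (i+1) * (i+1)) * ((m - i - 1) * Nat.choose (m - i - 2) (d - i - 1)) := by ring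
    _ = ((n - d + i) * Nat.choose (n - d + i - 1) i) * (Nat.choose (m - i - 1) (d - i) * (d - i)) := by rw [← e1, e2]
    _ = _ := by ring

lemma jcast {K : Type*} [Field K] [CharZero K] (m n d i : ℕ) (hm : d < m) (hn : d < n) (hi : i < d) :
    ((Nat.choose (n - d + (i+1) - 1) (i+1) : K) * (Nat.choose (m - (i+1) - 1) (d - (i+1)) : K)) *
      ((((i:K)+1)) * (((i:K)+1) - (m:K)))
    = -(((Nat.choose (n - d + i - 1) i : K) * (Nat.choose (m - i - 1) (d - i) : K)) *
      (((n:K) - ((d - i : ℕ):K)) * ((d - i : ℕ):K))) := by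
  have key := jnat m n d i hm hn hi
  have c1 : ((m - i - 1 : ℕ) : K) = (m:K) - (i:K) - 1 := by
    push_cast [Nat.sub_sub, Nat.cast_sub (by omega : i + 1 ≤ m)]; ring
  have c2 : ((n - d + i : ℕ) : K) = (n:K) - ((d - i : ℕ):K) := by
    push_cast [Nat.cast_sub (by omega : d ≤ n), Nat.cast_sub (by omega : i ≤ d)]; ring
  have keyK : ((Nat.choose (n - d + (i+1) - 1) (i+1) : K) * (Nat.choose (m - (i+1) - 1) (d - (i+1)) : K)) *
      (((i:K)+1) * ((m - i - 1 : ℕ):K))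
      = ((Nat.choose (n - d + i - 1) i : K) * (Nat.choose (m - i - 1) (d - i) : K)) *
      (((n - d + i : ℕ):K) * ((d - i : ℕ):K)) := by exact_mod_cast congrArg (Nat.cast (R := K)) key
  rw [c1] at keyK
  rw [c2] at keyK
  linear_combination -keyK

theorem jacobi_combination_satisfies_ode {K : Type*} [Field K] [CharZero K]
    (m n d : ℕ) (hm : d < m) (hn : d < n) (α β : K)
    (y : Polynomial K)
    (hy : y = ∑ j ∈ Finset.range (d + 1),
      C ((Nat.choose (n - d + j - 1) j : K) * (Nat.choose (m - j - 1) (d - j) : K)) *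
        (X - C α) ^ j * (X - C β) ^ (d - j)) :
    (X - C α) * (X - C β) * derivative (derivative y) +
      (C (α * ((n : K) - 1) + β * ((m : K) - 1)) - C ((m : K) + (n : K) - 2) * X) *
        derivative y +
      C ((d : K) * ((m : K) + (n : K) - (d : K) - 1)) * y = 0 := by
  subst hy
  set a : ℕ → K := fun j => (Nat.choose (n - d + j - 1) j : K) * (Nat.choose (m - j - 1) (d - j) : K) with ha
  set u : K[X] := X - C α with hu
  set v : K[X] := X - C β with hv
  -- the three families of terms
  set T1 : ℕ → K[X] := fun j => C (a j) * C ((j:K) * ((j:K) - (m:K))) * (u^(j-1) * v^(d-j+1)) with hT1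
  set T2 : ℕ → K[X] := fun j =>
    C (a j) * C (((n:K) - ((d-j:ℕ):K)) * ((d-j:ℕ):K) + (j:K) * ((m:K) - (j:K))) * (u^j * v^(d-j)) with hT2
  set T3 : ℕ → K[X] := fun j => C (a j) * C (((d-j:ℕ):K) * (((d-j:ℕ):K) - (n:K))) * (u^(j+1) * v^(d-j-1)) with hT3
  have key : ∀ j ∈ Finset.range (d+1),
      u * v * derivative (derivative (C (a j) * u^j * v^(d-j))) +
        (C (α * ((n:K) - 1) + β * ((m:K) - 1)) - C ((m:K) + (n:K) - 2) * X) *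
          derivative (C (a j) * u^j * v^(d-j)) +
        C ((d:K) * ((m:K) + (n:K) - (d:K) - 1)) * (C (a j) * u^j * v^(d-j))
      = T1 j + T2 j + T3 j := by
    intro j hj
    have hjd : j ≤ d := by simpa using Nat.lt_succ_iff.mp (Finset.mem_range.mp hj)
    have hdk : ((j:K) + ((d-j:ℕ):K)) = (d:K) := by
      rw [Nat.cast_sub hjd]; ring
    have h := jstep α β (m:K) (n:K) j (d-j)
    rw [hdk] at h
    simp only [hT1, hT2, hT3, mul_assoc, derivative_C_mul]
    linear_combination (C (a j)) * h
  have E1 : ∑ j ∈ Finset.range (d+1), T1 j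
      = ∑ j ∈ Finset.range (d+1),
        -(C (a j) * C (((n:K) - ((d-j:ℕ):K)) * ((d-j:ℕ):K))) * (u^j * v^(d-j)) := by
    rw [Finset.sum_range_succ' T1 d, Finset.sum_range_succ]
    have h0 : T1 0 = 0 := by simp [hT1]
    have hd : -(C (a d) * C (((n:K) - ((d-d:ℕ):K)) * ((d-d:ℕ):K))) * (u^d * v^(d-d)) = 0 := by
      simp
    rw [h0, hd, add_zero, add_zero]
    refine Finset.sum_congr rfl fun i hi => ?_
    have hid : i < d := Finset.mem_range.mp hi
    have hc := jcast (K := K) m n d i hm hn hid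
    have hco : a (i+1) * ((((i+1):ℕ):K) * ((((i+1):ℕ):K) - (m:K)))
        = -(a i * (((n:K) - ((d-i:ℕ):K)) * ((d-i:ℕ):K))) := by
      rw [ha]; push_cast; push_cast at hc; linear_combination hc
    rw [hT1]
    simp only []
    rw [show i + 1 - 1 = i from rfl, show d - (i+1) + 1 = d - i from by omega,
      ← C_mul, ← C_mul, hco, C_neg, neg_mul]
  have E3 : ∑ j ∈ Finset.range (d+1), T3 j
      = ∑ j ∈ Finset.range (d+1),
        -(C (a j) * C ((j:K) * ((m:K) - (j:K)))) * (u^j * v^(d-j)) := by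
    rw [Finset.sum_range_succ T3 d, Finset.sum_range_succ' _ d]
    have hd : T3 d = 0 := by simp [hT3]
    have h0 : -(C (a 0) * C (((0:ℕ):K) * ((m:K) - ((0:ℕ):K)))) * (u^0 * v^(d-0)) = 0 := by
      simp
    rw [hd, h0, add_zero, add_zero]
    refine Finset.sum_congr rfl fun i hi => ?_
    have hid : i < d := Finset.mem_range.mp hi
    have hc := jcast (K := K) m n d i hm hn hid
    have hco : a i * (((d-i:ℕ):K) * (((d-i:ℕ):K) - (n:K)))
        = -(a (i+1) * ((((i+1):ℕ):K) * ((m:K) - (((i+1):ℕ):K)))) := by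
      rw [ha]; push_cast; push_cast at hc; linear_combination -hc
    rw [hT3]
    simp only []
    rw [show d - i - 1 = d - (i+1) from rfl, ← C_mul, ← C_mul, hco, C_neg, neg_mul]
  calc (X - C α) * (X - C β) *
        derivative (derivative (∑ j ∈ Finset.range (d + 1), C (a j) * u ^ j * v ^ (d - j))) +
      (C (α * ((n : K) - 1) + β * ((m : K) - 1)) - C ((m : K) + (n : K) - 2) * X) *
        derivative (∑ j ∈ Finset.range (d + 1), C (a j) * u ^ j * v ^ (d - j)) +
      C ((d : K) * ((m : K) + (n : K) - (d : K) - 1)) *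
        (∑ j ∈ Finset.range (d + 1), C (a j) * u ^ j * v ^ (d - j))
      = ∑ j ∈ Finset.range (d+1),
        (u * v * derivative (derivative (C (a j) * u^j * v^(d-j))) +
        (C (α * ((n:K) - 1) + β * ((m:K) - 1)) - C ((m:K) + (n:K) - 2) * X) *
          derivative (C (a j) * u^j * v^(d-j)) +
        C ((d:K) * ((m:K) + (n:K) - (d:K) - 1)) * (C (a j) * u^j * v^(d-j))) := by
        simp only [derivative_sum, Finset.mul_sum, ← Finset.sum_add_distrib, ← hu, ← hv]
    _ = ∑ j ∈ Finset.range (d+1), (T1 j + T2 j + T3 j) := Finset.sum_congr rfl key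
    _ = (∑ j ∈ Finset.range (d+1), T1 j) + (∑ j ∈ Finset.range (d+1), T2 j)
          + (∑ j ∈ Finset.range (d+1), T3 j) := by
        rw [Finset.sum_add_distrib, Finset.sum_add_distrib]
    _ = 0 := by
        rw [E1, E3, ← Finset.sum_add_distrib, ← Finset.sum_add_distrib]
        refine Finset.sum_eq_zero fun j hj => ?_
        rw [hT2]
        simp only [map_add]
        ring
end

section
/- Let K be a field, f, g ∈ K[x] of degrees m and n respectively, and 0 ≤ d < min(m,n). Assume Sres_d(f,g) is nonzero of degree exactly d. If F, G ∈ K[x] with deg F < n-d and deg G < m-d are such that h = F·f + G·g is a nonzero polynomial of degree at most d, then there exists λ ∈ K, λ ≠ 0, with h = λ · Sres_d(f,g). -/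
open Polynomial

/-- The order-`d` polynomial subresultant of `f` (of nominal degree `m`) and `g`
(of nominal degree `n`): the determinant of the `(m+n-2d) × (m+n-2d)` matrix whose
first `n-d` rows hold the coefficients of `f` (with last column `x^(n-d-1-i)·f`) and
whose last `m-d` rows hold the coefficients of `g` (with last column `x^(m-d-1-i)·g`). -/
noncomputable def Sres {R : Type*} [CommRing R] (m n d : ℕ) (f g : Polynomial R) :
    Polynomial R :=
  (Matrix.of (fun i j : Fin (m + n - 2 * d) =>
    if (i : ℕ) < n - d then
      if (j : ℕ) = m + n - 2 * d - 1 then X ^ (n - d - 1 - (i : ℕ)) * f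
      else if (j : ℕ) ≤ m + (i : ℕ) then C (f.coeff (m + (i : ℕ) - (j : ℕ))) else 0
    else
      if (j : ℕ) = m + n - 2 * d - 1 then X ^ (m - d - 1 - ((i : ℕ) - (n - d))) * g
      else if (j : ℕ) ≤ n + ((i : ℕ) - (n - d)) then
        C (g.coeff (n + ((i : ℕ) - (n - d)) - (j : ℕ))) else 0)).det

theorem scalar_multiple_of_subresultant {K : Type*} [Field K]
    (m n d : ℕ) (hd : d < min m n) (f g : Polynomial K)
    (hf : f.natDegree = m) (hg : g.natDegree = n)
    (hS : Sres m n d f g ≠ 0) (hSdeg : (Sres m n d f g).natDegree = d)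
    (F G : Polynomial K) (hF : F.degree < (n - d : ℕ)) (hG : G.degree < (m - d : ℕ))
    (h : Polynomial K) (hh : h = F * f + G * g) (hh0 : h ≠ 0) (hhd : h.degree ≤ d) :
    ∃ lam : K, lam ≠ 0 ∧ h = C lam * Sres m n d f g := by
  classical
  have hdm : d < m := lt_of_lt_of_le hd (min_le_left _ _)
  have hdn : d < n := lt_of_lt_of_le hd (min_le_right _ _)
  -- degree facts
  have hFnat : F.natDegree < n - d := by
    rcases eq_or_ne F 0 with rfl | h0
    · simp only [natDegree_zero]; omega
    · exact (natDegree_lt_iff_degree_lt h0).mpr hF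
  have hGnat : G.natDegree < m - d := by
    rcases eq_or_ne G 0 with rfl | h0
    · simp only [natDegree_zero]; omega
    · exact (natDegree_lt_iff_degree_lt h0).mpr hG
  set lastIdx : Fin (m + n - 2 * d) := ⟨m + n - 2 * d - 1, by omega⟩ with hlast
  set φ' : ℕ → K := fun k =>
    if k < n - d then F.coeff (n - d - 1 - k) else G.coeff (m - d - 1 - (k - (n - d)))
    with hφ'
  set Ent : ℕ → ℕ → Polynomial K := fun k jj =>
    if k < n - d then
      if jj = m + n - 2 * d - 1 then X ^ (n - d - 1 - k) * f
      else if jj ≤ m + k then C (f.coeff (m + k - jj)) else 0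
    else
      if jj = m + n - 2 * d - 1 then X ^ (m - d - 1 - (k - (n - d))) * g
      else if jj ≤ n + (k - (n - d)) then
        C (g.coeff (n + (k - (n - d)) - jj)) else 0
    with hEnt
  set Mat : Matrix (Fin (m + n - 2 * d)) (Fin (m + n - 2 * d)) (Polynomial K) :=
    Matrix.of (fun i j => Ent (i : ℕ) (j : ℕ)) with hM
  have hSM : Sres m n d f g = Mat.det := rfl
  -- the two polynomial reconstruction sums
  have hFsum : ∑ k ∈ Finset.range (n - d), C (F.coeff (n - d - 1 - k)) * X ^ (n - d - 1 - k) = F := by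
    rw [Finset.sum_range_reflect (fun k => C (F.coeff k) * X ^ k) (n - d)]
    conv_rhs => rw [F.as_sum_range' (n - d) hFnat]
    exact Finset.sum_congr rfl fun k _ => C_mul_X_pow_eq_monomial
  have hGsum : ∑ k ∈ Finset.range (m - d), C (G.coeff (m - d - 1 - k)) * X ^ (m - d - 1 - k) = G := by
    rw [Finset.sum_range_reflect (fun k => C (G.coeff k) * X ^ k) (m - d)]
    conv_rhs => rw [G.as_sum_range' (m - d) hGnat]
    exact Finset.sum_congr rfl fun k _ => C_mul_X_pow_eq_monomial
  have hFf : ∑ k ∈ Finset.range (n - d), C (F.coeff (n - d - 1 - k)) * (X ^ (n - d - 1 - k) * f)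
      = F * f := by
    calc ∑ k ∈ Finset.range (n - d), C (F.coeff (n - d - 1 - k)) * (X ^ (n - d - 1 - k) * f)
        = (∑ k ∈ Finset.range (n - d), C (F.coeff (n - d - 1 - k)) * X ^ (n - d - 1 - k)) * f := by
          rw [Finset.sum_mul]
          exact Finset.sum_congr rfl fun k _ => (mul_assoc _ _ _).symm
      _ = F * f := by rw [hFsum]
  have hGg : ∑ k ∈ Finset.range (m - d), C (G.coeff (m - d - 1 - k)) * (X ^ (m - d - 1 - k) * g)
      = G * g := by
    calc ∑ k ∈ Finset.range (m - d), C (G.coeff (m - d - 1 - k)) * (X ^ (m - d - 1 - k) * g)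
        = (∑ k ∈ Finset.range (m - d), C (G.coeff (m - d - 1 - k)) * X ^ (m - d - 1 - k)) * g := by
          rw [Finset.sum_mul]
          exact Finset.sum_congr rfl fun k _ => (mul_assoc _ _ _).symm
      _ = G * g := by rw [hGsum]
  -- the row identity
  have hrow : ∀ j : Fin (m + n - 2 * d),
      ∑ i : Fin (m + n - 2 * d), C (φ' (i : ℕ)) * Mat i j = if j = lastIdx then h else 0 := by
    intro j
    have hconv : ∑ i : Fin (m + n - 2 * d), C (φ' (i : ℕ)) * Mat i j
        = ∑ k ∈ Finset.range (m + n - 2 * d), C (φ' k) * Ent k (j : ℕ) :=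
      Fin.sum_univ_eq_sum_range (fun k => C (φ' k) * Ent k (j : ℕ)) _
    have hsplit : Finset.range (m + n - 2 * d) = Finset.range ((n - d) + (m - d)) := by
      congr 1; omega
    rw [hconv, hsplit, Finset.sum_range_add]
    by_cases hj : j = lastIdx
    · rw [if_pos hj]
      have hjv : (j : ℕ) = m + n - 2 * d - 1 := by rw [hj]
      have c1 : ∑ k ∈ Finset.range (n - d), C (φ' k) * Ent k (j : ℕ) = F * f := by
        rw [← hFf]
        refine Finset.sum_congr rfl fun k hk => ?_
        rw [Finset.mem_range] at hk
        simp only [hφ', hEnt, if_pos hk, if_pos hjv]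
      have c2 : ∑ k ∈ Finset.range (m - d), C (φ' ((n - d) + k)) * Ent ((n - d) + k) (j : ℕ)
          = G * g := by
        rw [← hGg]
        refine Finset.sum_congr rfl fun k hk => ?_
        rw [Finset.mem_range] at hk
        have hnk : ¬ ((n - d) + k < n - d) := by omega
        simp only [hφ', hEnt, if_neg hnk, if_pos hjv, Nat.add_sub_cancel_left]
      rw [c1, c2, hh]
    · rw [if_neg hj]
      have hjv : (j : ℕ) ≠ m + n - 2 * d - 1 := fun hc => hj (Fin.ext hc)
      have hjlt : (j : ℕ) < m + n - 2 * d := j.isLt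
      -- coefficient index
      have hde : d < m + n - d - 1 - (j : ℕ) := by omega
      have c1 : ∑ k ∈ Finset.range (n - d), C (φ' k) * Ent k (j : ℕ)
          = C ((F * f).coeff (m + n - d - 1 - (j : ℕ))) := by
        rw [← hFf, finset_sum_coeff, map_sum]
        refine Finset.sum_congr rfl fun k hk => ?_
        rw [Finset.mem_range] at hk
        rw [coeff_C_mul, map_mul]
        congr 1
        · simp only [hφ', if_pos hk]
        · simp only [hEnt, if_pos hk, if_neg hjv, coeff_X_pow_mul']
          split_ifs with h1 h2 h2
          · congr 2; omega
          · exfalso; omega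
          · exfalso; omega
          · simp
      have c2 : ∑ k ∈ Finset.range (m - d), C (φ' ((n - d) + k)) * Ent ((n - d) + k) (j : ℕ)
          = C ((G * g).coeff (m + n - d - 1 - (j : ℕ))) := by
        rw [← hGg, finset_sum_coeff, map_sum]
        refine Finset.sum_congr rfl fun k hk => ?_
        rw [Finset.mem_range] at hk
        rw [coeff_C_mul, map_mul]
        have hnk : ¬ ((n - d) + k < n - d) := by omega
        congr 1
        · simp only [hφ', if_neg hnk, Nat.add_sub_cancel_left]
        · simp only [hEnt, if_neg hnk, if_neg hjv, Nat.add_sub_cancel_left, coeff_X_pow_mul']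
          split_ifs with h1 h2 h2
          · congr 2; omega
          · exfalso; omega
          · exfalso; omega
          · simp
      rw [c1, c2, ← map_add, ← coeff_add, ← hh]
      have hcz : h.coeff (m + n - d - 1 - (j : ℕ)) = 0 := by
        apply coeff_eq_zero_of_degree_lt
        exact lt_of_le_of_lt hhd (by exact_mod_cast hde)
      rw [hcz, map_zero]
  -- the adjugate identity
  have hVM : ∀ i : Fin (m + n - 2 * d),
      h * Mat.adjugate lastIdx i = Mat.det * C (φ' (i : ℕ)) := by
    intro i
    have key : ∑ jj : Fin (m + n - 2 * d),
        (∑ k : Fin (m + n - 2 * d), C (φ' (k : ℕ)) * Mat k jj) * Mat.adjugate jj i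
        = Mat.det * C (φ' (i : ℕ)) := by
      have swap : ∑ jj : Fin (m + n - 2 * d),
          (∑ k : Fin (m + n - 2 * d), C (φ' (k : ℕ)) * Mat k jj) * Mat.adjugate jj i
          = ∑ k : Fin (m + n - 2 * d), C (φ' (k : ℕ)) * ((Mat * Mat.adjugate) k i) := by
        simp_rw [Finset.sum_mul, Matrix.mul_apply, Finset.mul_sum, mul_assoc]
        exact Finset.sum_comm
      rw [swap, Matrix.mul_adjugate]
      simp [Matrix.smul_apply, Matrix.one_apply, mul_ite, mul_comm]
    have h2 : ∑ jj : Fin (m + n - 2 * d),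
        (if jj = lastIdx then h else 0) * Mat.adjugate jj i = h * Mat.adjugate lastIdx i := by
      simp [ite_mul]
    rw [← key, ← h2]
    exact Finset.sum_congr rfl fun jj _ => by rw [hrow jj]
  -- constancy of the relevant adjugate entries
  have hconst : ∀ i : Fin (m + n - 2 * d), ∃ c : K, Mat.adjugate lastIdx i = C c := by
    intro i
    rw [Matrix.adjugate_apply]
    set A := Mat.updateRow i (Pi.single lastIdx 1) with hA
    have hAi : ∀ j, A i j = if j = lastIdx then 1 else 0 := by
      intro j
      rw [hA, Matrix.updateRow_self, Pi.single_apply]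
    have hAc : ∀ k j, j ≠ lastIdx → ∃ a : K, A k j = C a := by
      intro k j hjne
      rcases eq_or_ne k i with rfl | hk
      · exact ⟨0, by rw [hAi, if_neg hjne, map_zero]⟩
      · rw [hA, Matrix.updateRow_ne hk]
        have hjv : (j : ℕ) ≠ m + n - 2 * d - 1 := fun hc => hjne (Fin.ext hc)
        show ∃ a : K, Ent (k : ℕ) (j : ℕ) = C a
        simp only [hEnt]
        split_ifs with h1 h2 h3 h2 h3 <;>
          first
            | exact ⟨_, rfl⟩
            | exact ⟨0, (map_zero C).symm⟩
            | exact absurd ‹(j : ℕ) = m + n - 2 * d - 1› hjv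
    set ecol : Fin (m + n - 2 * d) → Polynomial K := fun k => if k = i then 1 else 0 with hecol
    have hdet0 : (A.updateCol lastIdx (fun k => A k lastIdx - ecol k)).det = 0 := by
      apply Matrix.det_eq_zero_of_row_eq_zero i
      intro j
      rw [Matrix.updateCol_apply]
      split_ifs with hjl
      · rw [hecol]
        simp only [if_pos rfl, hAi]
        simp
      · rw [hAi, if_neg hjl]
    have hsplitdet : A.det = (A.updateCol lastIdx ecol).det := by
      have hcol : (fun k => A k lastIdx) = ecol + (fun k => A k lastIdx - ecol k) := by
        funext k; simp
      conv_lhs => rw [← Matrix.updateCol_eq_self A lastIdx, hcol]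
      rw [Matrix.det_updateCol_add, hdet0, add_zero]
    set B : Matrix (Fin (m + n - 2 * d)) (Fin (m + n - 2 * d)) K :=
      Matrix.of (fun k j => if j = lastIdx then (if k = i then 1 else 0) else (A k j).coeff 0)
      with hB
    have hmap : A.updateCol lastIdx ecol = B.map (C : K → Polynomial K) := by
      refine Matrix.ext fun k j => ?_
      rw [Matrix.map_apply, Matrix.updateCol_apply, hB]
      show _ = C (if j = lastIdx then (if k = i then 1 else 0) else (A k j).coeff 0)
      split_ifs with hjl hki
      · rw [hecol]; simp [hki]
      · rw [hecol]; simp [hki]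
      · obtain ⟨a, ha⟩ := hAc k j hjl
        rw [ha, coeff_C_zero]
    refine ⟨B.det, ?_⟩
    rw [hsplitdet, hmap]
    exact ((C : K →+* Polynomial K).map_det B).symm
  -- some coefficient of φ' is nonzero
  have hφne : ∃ i : Fin (m + n - 2 * d), φ' (i : ℕ) ≠ 0 := by
    by_contra hall
    push_neg at hall
    have hadj : ∀ i, Mat.adjugate lastIdx i = 0 := by
      intro i
      have hv := hVM i
      rw [hall i, map_zero, mul_zero] at hv
      exact (mul_eq_zero.mp hv).resolve_left hh0
    have hdetz : Mat.det = 0 := by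
      have h1 := congrArg (fun M : Matrix (Fin (m + n - 2 * d)) (Fin (m + n - 2 * d))
        (Polynomial K) => M lastIdx lastIdx) (Matrix.adjugate_mul Mat)
      simp only [Matrix.mul_apply, hadj, zero_mul, Finset.sum_const_zero,
        Matrix.smul_apply, Matrix.one_apply_eq, smul_eq_mul, mul_one] at h1
      exact h1.symm
    exact hS (by rw [hSM, hdetz])
  obtain ⟨i0, hi0⟩ := hφne
  obtain ⟨c, hc⟩ := hconst i0
  have heq : h * C c = Sres m n d f g * C (φ' (i0 : ℕ)) := by
    rw [hSM, ← hc]; exact hVM i0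
  have hcne : c ≠ 0 := by
    intro hc0
    rw [hc0, map_zero, mul_zero] at heq
    exact (mul_ne_zero hS (C_ne_zero.mpr hi0)) heq.symm
  refine ⟨φ' (i0 : ℕ) / c, div_ne_zero hi0 hcne, ?_⟩
  apply mul_right_cancel₀ (C_ne_zero.mpr hcne)
  rw [heq, mul_comm (C (φ' (i0 : ℕ) / c)) (Sres m n d f g), mul_assoc, ← map_mul,
    div_mul_cancel₀ _ hcne]
end

section
/- Let m, n, d be natural numbers with 0 ≤ d < min(m,n) and consider (x-α)^m, (x-β)^n ∈ ℤ[α,β,x] with α, β indeterminates. Then Sres_d((x-α)^m, (x-β)^n) lies in the subring ℤ[x-α, x-β] of ℤ[α,β,x]. -/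
open Polynomial

namespace SresAux

variable {B : Type*} [CommRing B]

/-- The `i`-th row polynomial of the subresultant matrix. -/
noncomputable def rpN (m n d : ℕ) (f g : B[X]) (i : ℕ) : B[X] :=
  if i < n - d then X ^ (n - d - 1 - i) * f else X ^ (m - d - 1 - (i - (n - d))) * g

/-- The coefficient matrix: all columns except the last hold coefficients at
degrees `m+n-d-1-j`, and the last column holds the coefficient at `k`. -/
noncomputable def ME (m n d : ℕ) (f g : B[X]) (k : ℕ) :
    Matrix (Fin (m + n - 2 * d)) (Fin (m + n - 2 * d)) B :=
  Matrix.of fun i j =>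
    if (j : ℕ) = m + n - 2 * d - 1 then (rpN m n d f g (i : ℕ)).coeff k
    else (rpN m n d f g (i : ℕ)).coeff (m + n - d - 1 - (j : ℕ))

lemma det_updateColumn_finset_sum {n' : Type*} [DecidableEq n'] [Fintype n'] {ι : Type*}
    (A : Matrix n' n' B) (l : n') (s : Finset ι) (c : ι → B) (v : ι → n' → B) :
    (A.updateCol l (fun i => ∑ k ∈ s, c k * v k i)).det
      = ∑ k ∈ s, c k * (A.updateCol l (v k)).det := by
  classical
  induction s using Finset.induction_on with
  | empty =>
      simp only [Finset.sum_empty]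
      exact Matrix.det_eq_zero_of_column_eq_zero l (fun i => by simp)
  | @insert a s h ih =>
      rw [show (fun i => ∑ k ∈ insert a s, c k * v k i)
          = (c a • v a) + (fun i => ∑ k ∈ s, c k * v k i) from
        funext fun i => by simp [Finset.sum_insert h, smul_eq_mul]]
      rw [Matrix.det_updateCol_add, Matrix.det_updateCol_smul, ih,
        Finset.sum_insert h]

lemma rpN_natDegree_le (m n d : ℕ) (f g : B[X]) (hm : d < m) (hn : d < n)
    (hf : f.natDegree ≤ m) (hg : g.natDegree ≤ n) (i : ℕ) :
    (rpN m n d f g i).natDegree ≤ m + n - d - 1 := by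
  unfold rpN
  split_ifs with h
  · refine le_trans natDegree_mul_le ?_
    have := natDegree_X_pow_le (R := B) (n - d - 1 - i); omega
  · refine le_trans natDegree_mul_le ?_
    have := natDegree_X_pow_le (R := B) (m - d - 1 - (i - (n - d))); omega

lemma poly_as_sum {D : ℕ} {p : B[X]} (hp : p.natDegree ≤ D) :
    p = ∑ k ∈ Finset.range (D + 1), X ^ k * C (p.coeff k) := by
  conv_lhs => rw [p.as_sum_range' (D + 1) (Nat.lt_succ_of_le hp)]
  exact Finset.sum_congr rfl fun k _ => by
    rw [← C_mul_X_pow_eq_monomial, mul_comm]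

lemma tay {D : ℕ} {p : B[X]} (hp : p.natDegree ≤ D) (t : B) (s : ℕ) :
    (p.comp (X + C t)).coeff s
      = ∑ l ∈ Finset.range (D + 1), (l.choose s : B) * t ^ (l - s) * p.coeff l := by
  conv_lhs => rw [poly_as_sum hp]
  rw [Polynomial.sum_comp, finset_sum_coeff]
  refine Finset.sum_congr rfl fun l _ => ?_
  rw [mul_comp, X_pow_comp, C_comp, coeff_mul_C, coeff_X_add_C_pow]
  ring

/-- The given `Sres` matrix is the matrix of coefficients of the row polynomials,
with the row polynomials themselves in the last column. -/
lemma sres_eq (m n d : ℕ) (hm : d < m) (hn : d < n) (f g : B[X]) :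
    Sres m n d f g = (Matrix.of (fun i j : Fin (m + n - 2 * d) =>
      if (j : ℕ) = m + n - 2 * d - 1 then rpN m n d f g (i : ℕ)
      else C ((rpN m n d f g (i : ℕ)).coeff (m + n - d - 1 - (j : ℕ))))).det := by
  unfold Sres
  congr 1
  refine Matrix.ext fun i j => ?_
  have hi := i.isLt
  have hj := j.isLt
  simp only [Matrix.of_apply]
  by_cases h1 : (i : ℕ) < n - d
  · rw [if_pos h1]
    by_cases h2 : (j : ℕ) = m + n - 2 * d - 1
    · rw [if_pos h2, if_pos h2, rpN, if_pos h1]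
    · rw [if_neg h2, if_neg h2, rpN, if_pos h1, mul_comm (X ^ (n - d - 1 - (i:ℕ))) f, coeff_mul_X_pow',
        apply_ite C, map_zero]
      have key : (n - d - 1 - (i:ℕ) ≤ m + n - d - 1 - (j:ℕ)) ↔ ((j:ℕ) ≤ m + (i:ℕ)) := by
        omega
      split_ifs with h3 h4 h4
      · congr 2; omega
      · exact absurd (key.mpr h3) h4
      · exact absurd (key.mp h4) h3
      · rfl
  · rw [if_neg h1]
    by_cases h2 : (j : ℕ) = m + n - 2 * d - 1
    · rw [if_pos h2, if_pos h2, rpN, if_neg h1]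
    · rw [if_neg h2, if_neg h2, rpN, if_neg h1, mul_comm (X ^ (m - d - 1 - ((i:ℕ) - (n - d)))) g, coeff_mul_X_pow',
        apply_ite C, map_zero]
      have key : (m - d - 1 - ((i:ℕ) - (n - d)) ≤ m + n - d - 1 - (j:ℕ))
          ↔ ((j:ℕ) ≤ n + ((i:ℕ) - (n - d))) := by omega
      split_ifs with h3 h4 h4
      · congr 2; omega
      · exact absurd (key.mpr h3) h4
      · exact absurd (key.mp h4) h3
      · rfl

lemma lemA (m n d : ℕ) (hm : d < m) (hn : d < n) (f g : B[X])
    (hf : f.natDegree ≤ m) (hg : g.natDegree ≤ n) :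
    Sres m n d f g
      = ∑ k ∈ Finset.range (m + n - d), X ^ k * C ((ME m n d f g k).det) := by
  have hL : m + n - 2 * d - 1 < m + n - 2 * d := by omega
  set l : Fin (m + n - 2 * d) := ⟨m + n - 2 * d - 1, hL⟩ with hldef
  have hcast : m + n - d - 1 + 1 = m + n - d := by omega
  rw [sres_eq m n d hm hn f g]
  have hmat : (Matrix.of fun i j : Fin (m + n - 2 * d) =>
        if (j : ℕ) = m + n - 2 * d - 1 then rpN m n d f g (i : ℕ)
        else C ((rpN m n d f g (i : ℕ)).coeff (m + n - d - 1 - (j : ℕ))))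
      = (Matrix.of fun i j : Fin (m + n - 2 * d) =>
          C ((rpN m n d f g (i : ℕ)).coeff (m + n - d - 1 - (j : ℕ)))).updateCol l
        (fun i => ∑ k ∈ Finset.range (m + n - d),
          (X : B[X]) ^ k * C ((rpN m n d f g (i : ℕ)).coeff k)) := by
    refine Matrix.ext fun i j => ?_
    rw [Matrix.updateCol_apply]
    by_cases hj : j = l
    · rw [if_pos hj, Matrix.of_apply, if_pos (show (j : ℕ) = m + n - 2 * d - 1 by rw [hj])]
      have h1 := poly_as_sum (rpN_natDegree_le m n d f g hm hn hf hg (i : ℕ))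
      rw [hcast] at h1
      exact h1
    · rw [if_neg hj, Matrix.of_apply,
        if_neg (show ¬(j : ℕ) = m + n - 2 * d - 1 from fun h => hj (Fin.val_injective h))]
      rfl
  rw [hmat, det_updateColumn_finset_sum]
  refine Finset.sum_congr rfl fun k _ => ?_
  congr 1
  have hmat2 : (Matrix.of fun i j : Fin (m + n - 2 * d) =>
        C ((rpN m n d f g (i : ℕ)).coeff (m + n - d - 1 - (j : ℕ)))).updateCol l
      (fun i => C ((rpN m n d f g (i : ℕ)).coeff k))
      = (C : B →+* B[X]).mapMatrix (ME m n d f g k) := by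
    refine Matrix.ext fun i j => ?_
    rw [Matrix.updateCol_apply]
    simp only [RingHom.mapMatrix_apply, Matrix.map_apply, ME, Matrix.of_apply]
    by_cases hj : j = l
    · rw [if_pos hj, if_pos (show (j : ℕ) = m + n - 2 * d - 1 by rw [hj])]
    · rw [if_neg hj,
        if_neg (show ¬(j : ℕ) = m + n - 2 * d - 1 from fun h => hj (Fin.val_injective h))]
  rw [hmat2, ← RingHom.map_det]

lemma step2 (m n d : ℕ) (hm : d < m) (hn : d < n)
    (p : Fin (m + n - 2 * d) → B[X]) (hp : ∀ i, (p i).natDegree ≤ m + n - d - 1) (t : B) :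
    (Matrix.of fun i j : Fin (m + n - 2 * d) =>
        if (j : ℕ) = m + n - 2 * d - 1 then ((p i).comp (X + C t)).coeff 0
        else ((p i).comp (X + C t)).coeff (m + n - d - 1 - (j : ℕ))).det
      = ∑ k ∈ Finset.range (m + n - d), t ^ k *
          (Matrix.of fun i j : Fin (m + n - 2 * d) =>
            if (j : ℕ) = m + n - 2 * d - 1 then (p i).coeff k
            else (p i).coeff (m + n - d - 1 - (j : ℕ))).det := by
  have hL : m + n - 2 * d - 1 < m + n - 2 * d := by omega
  set l : Fin (m + n - 2 * d) := ⟨m + n - 2 * d - 1, hL⟩ with hldef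
  have hcast : m + n - d - 1 + 1 = m + n - d := by omega
  set A : Matrix (Fin (m + n - 2 * d)) (Fin (m + n - 2 * d)) B :=
    Matrix.of fun i j : Fin (m + n - 2 * d) =>
      if (j : ℕ) = m + n - 2 * d - 1 then ((p i).comp (X + C t)).coeff 0
      else ((p i).comp (X + C t)).coeff (m + n - d - 1 - (j : ℕ)) with hA
  have hupdate : A = A.updateCol l
      (fun i => ∑ k ∈ Finset.range (m + n - d), t ^ k * (p i).coeff k) := by
    refine Matrix.ext fun i j => ?_
    rw [Matrix.updateCol_apply]
    by_cases hj : j = l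
    · rw [if_pos hj, hj, hA, Matrix.of_apply,
        if_pos (show (l : ℕ) = m + n - 2 * d - 1 from rfl)]
      rw [tay (hp i) t 0]
      rw [hcast]
      refine Finset.sum_congr rfl fun k _ => ?_
      simp [Nat.choose_zero_right]
    · rw [if_neg hj]
  conv_lhs => rw [hupdate]
  rw [det_updateColumn_finset_sum]
  refine Finset.sum_congr rfl fun k _ => ?_
  congr 1
  -- the Pascal matrix
  set Q : Matrix (Fin (m + n - 2 * d)) (Fin (m + n - 2 * d)) B :=
    Matrix.of fun j' j : Fin (m + n - 2 * d) =>
      if (j' : ℕ) = m + n - 2 * d - 1 then (if (j : ℕ) = m + n - 2 * d - 1 then 1 else 0)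
      else if (j : ℕ) = m + n - 2 * d - 1 then 0
      else ((m + n - d - 1 - (j' : ℕ)).choose (m + n - d - 1 - (j : ℕ)) : B)
            * t ^ ((j : ℕ) - (j' : ℕ)) with hQ
  have hdetQ : Q.det = 1 := by
    have htri : Q.BlockTriangular id := by
      intro i j hji
      have hji' : (j : ℕ) < (i : ℕ) := hji
      have hi := i.isLt
      rw [hQ, Matrix.of_apply]
      by_cases h1 : (i : ℕ) = m + n - 2 * d - 1
      · rw [if_pos h1, if_neg (by omega)]
      · rw [if_neg h1]
        by_cases h2 : (j : ℕ) = m + n - 2 * d - 1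
        · rw [if_pos h2]
        · rw [if_neg h2, Nat.choose_eq_zero_of_lt (by omega), Nat.cast_zero, zero_mul]
    rw [Matrix.det_of_upperTriangular htri]
    refine Finset.prod_eq_one fun j _ => ?_
    rw [hQ, Matrix.of_apply]
    by_cases h1 : (j : ℕ) = m + n - 2 * d - 1
    · rw [if_pos h1, if_pos h1]
    · rw [if_neg h1, if_neg h1, Nat.choose_self, Nat.cast_one, Nat.sub_self, pow_zero,
        one_mul]
  have hprod : A.updateCol l (fun i => (p i).coeff k)
      = (Matrix.of fun i j : Fin (m + n - 2 * d) =>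
          if (j : ℕ) = m + n - 2 * d - 1 then (p i).coeff k
          else (p i).coeff (m + n - d - 1 - (j : ℕ))) * Q := by
    refine Matrix.ext fun i j => ?_
    rw [Matrix.updateCol_apply, Matrix.mul_apply]
    by_cases hj : j = l
    · rw [if_pos hj]
      have : ∀ j' : Fin (m + n - 2 * d),
          (Matrix.of fun i j : Fin (m + n - 2 * d) =>
            if (j : ℕ) = m + n - 2 * d - 1 then (p i).coeff k
            else (p i).coeff (m + n - d - 1 - (j : ℕ))) i j' * Q j' j
          = if j' = l then (p i).coeff k else 0 := by
        intro j'
        have hlval : (l : ℕ) = m + n - 2 * d - 1 := rfl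
        rw [hQ, Matrix.of_apply, Matrix.of_apply, hj]
        by_cases h1 : (j' : ℕ) = m + n - 2 * d - 1
        · have h2 : j' = l := Fin.val_injective (h1.trans hlval.symm)
          simp [h2, hlval]
        · have h2 : ¬j' = l := fun h => h1 (by rw [h, hlval])
          simp [h1, h2, hlval]
      rw [Finset.sum_congr rfl fun j' _ => this j', Finset.sum_ite_eq' Finset.univ l
        (fun _ => (p i).coeff k), if_pos (Finset.mem_univ l)]
    · rw [if_neg hj]
      have hjne : (j : ℕ) ≠ m + n - 2 * d - 1 := fun h => hj (Fin.val_injective h)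
      have hjlt := j.isLt
      -- rewrite the sum over `Fin` as a sum over `range`
      rw [show (∑ j' : Fin (m + n - 2 * d),
            (Matrix.of fun i j : Fin (m + n - 2 * d) =>
              if (j : ℕ) = m + n - 2 * d - 1 then (p i).coeff k
              else (p i).coeff (m + n - d - 1 - (j : ℕ))) i j' * Q j' j)
          = ∑ x ∈ Finset.range (m + n - 2 * d),
              (if x = m + n - 2 * d - 1 then (p i).coeff k
                else (p i).coeff (m + n - d - 1 - x)) *
              (if x = m + n - 2 * d - 1 then 0
                else ((m + n - d - 1 - x).choose (m + n - d - 1 - (j : ℕ)) : B)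
                  * t ^ ((j : ℕ) - x)) from by
        rw [← Fin.sum_univ_eq_sum_range]
        refine Finset.sum_congr rfl fun j' _ => ?_
        rw [hQ, Matrix.of_apply, Matrix.of_apply]
        by_cases h1 : (j' : ℕ) = m + n - 2 * d - 1
        · simp [h1, hjne]
        · simp [h1, hjne]]
      conv_lhs => rw [hA]
      rw [Matrix.of_apply, if_neg hjne, tay (hp i) t (m + n - d - 1 - (j : ℕ)),
        ← Finset.sum_range_reflect]
      rw [← Finset.sum_subset (Finset.range_subset_range.mpr
          (show m + n - 2 * d - 1 ≤ m + n - 2 * d from by omega))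
          (fun x hx1 hx2 => by
            have hx : x = m + n - 2 * d - 1 := by
              have h1 := Finset.mem_range.mp hx1
              have h2 : ¬x < m + n - 2 * d - 1 := fun h => hx2 (Finset.mem_range.mpr h)
              omega
            simp [hx])]
      rw [← Finset.sum_subset (Finset.range_subset_range.mpr
          (show m + n - 2 * d - 1 ≤ m + n - d - 1 + 1 from by omega))
          (fun x hx1 hx2 => by
            have h1 : ¬x < m + n - 2 * d - 1 := fun h => hx2 (Finset.mem_range.mpr h)
            have h2 := Finset.mem_range.mp hx1
            rw [Nat.choose_eq_zero_of_lt (by omega), Nat.cast_zero, zero_mul, zero_mul])]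
      refine Finset.sum_congr rfl fun x hx => ?_
      have hx' := Finset.mem_range.mp hx
      have hc : ¬x = m + n - 2 * d - 1 := by omega
      rw [if_neg hc, if_neg hc]
      have e1 : m + n - d - 1 + 1 - 1 - x = m + n - d - 1 - x := by omega
      rw [e1]
      have e2 : m + n - d - 1 - x - (m + n - d - 1 - (j : ℕ)) = (j : ℕ) - x := by omega
      rw [e2]
      ring
  rw [hprod, Matrix.det_mul, hdetQ, mul_one]

lemma step1 (m n d : ℕ) (hm : d < m) (hn : d < n) (F G : B[X]) (t : B) :
    (ME m n d (F.comp (X + C t)) (G.comp (X + C t)) 0).det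
      = (Matrix.of fun i j : Fin (m + n - 2 * d) =>
          if (j : ℕ) = m + n - 2 * d - 1 then
            ((rpN m n d F G (i : ℕ)).comp (X + C t)).coeff 0
          else ((rpN m n d F G (i : ℕ)).comp (X + C t)).coeff
            (m + n - d - 1 - (j : ℕ))).det := by
  set P : Matrix (Fin (m + n - 2 * d)) (Fin (m + n - 2 * d)) B :=
    Matrix.of fun i i' : Fin (m + n - 2 * d) =>
      if (i : ℕ) < n - d then
        (if (i' : ℕ) < n - d then
          ((n - d - 1 - (i : ℕ)).choose (n - d - 1 - (i' : ℕ)) : B) * t ^ ((i' : ℕ) - (i : ℕ))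
        else 0)
      else
        (if (i' : ℕ) < n - d then 0
        else ((m - d - 1 - ((i : ℕ) - (n - d))).choose
            (m - d - 1 - ((i' : ℕ) - (n - d))) : B) * t ^ ((i' : ℕ) - (i : ℕ))) with hP
  have key : ∀ i : Fin (m + n - 2 * d),
      (rpN m n d F G (i : ℕ)).comp (X + C t)
        = ∑ i' : Fin (m + n - 2 * d),
            P i i' • rpN m n d (F.comp (X + C t)) (G.comp (X + C t)) (i' : ℕ) := by
    intro i
    by_cases hi : (i : ℕ) < n - d
    · rw [show rpN m n d F G (i : ℕ) = X ^ (n - d - 1 - (i : ℕ)) * F from by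
        rw [rpN, if_pos hi], mul_comp, X_pow_comp]
      simp only [hP, Matrix.of_apply, hi, if_true]
      rw [Fin.sum_univ_eq_sum_range (fun x =>
        (if x < n - d then
            ((n - d - 1 - (i : ℕ)).choose (n - d - 1 - x) : B) * t ^ (x - (i : ℕ))
          else 0) • rpN m n d (F.comp (X + C t)) (G.comp (X + C t)) x) (m + n - 2 * d)]
      rw [← Finset.sum_subset (Finset.range_subset_range.mpr
          (show n - d ≤ m + n - 2 * d from by omega)) (fun x _ hx2 => by
        rw [if_neg (fun h => hx2 (Finset.mem_range.mpr h)), zero_smul])]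
      rw [← Finset.sum_range_reflect]
      rw [add_pow, Finset.sum_mul]
      rw [← Finset.sum_subset (Finset.range_subset_range.mpr
          (show n - d - 1 - (i : ℕ) + 1 ≤ n - d from by omega)) (fun x hx1 hx2 => by
        have h1 : ¬x < n - d - 1 - (i : ℕ) + 1 := fun h => hx2 (Finset.mem_range.mpr h)
        have h2 := Finset.mem_range.mp hx1
        rw [show n - d - 1 - (n - d - 1 - x) = x from by omega,
          Nat.choose_eq_zero_of_lt (by omega)]
        simp)]
      refine Finset.sum_congr rfl fun x hx => ?_
      have hx' := Finset.mem_range.mp hx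
      rw [if_pos (show n - d - 1 - x < n - d from by omega), rpN,
        if_pos (show n - d - 1 - x < n - d from by omega)]
      rw [show n - d - 1 - (n - d - 1 - x) = x from by omega]
      rw [show n - d - 1 - x - (i : ℕ) = n - d - 1 - (i : ℕ) - x from by omega]
      rw [smul_eq_C_mul, map_mul, C_pow, map_natCast]
      ring
    · rw [show rpN m n d F G (i : ℕ) = X ^ (m - d - 1 - ((i : ℕ) - (n - d))) * G from by
        rw [rpN, if_neg hi], mul_comp, X_pow_comp]
      simp only [hP, Matrix.of_apply, hi, if_false]
      rw [Fin.sum_univ_eq_sum_range (fun x =>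
        (if x < n - d then 0 else
          ((m - d - 1 - ((i : ℕ) - (n - d))).choose (m - d - 1 - (x - (n - d))) : B)
            * t ^ (x - (i : ℕ))) • rpN m n d (F.comp (X + C t)) (G.comp (X + C t)) x)
        (m + n - 2 * d)]
      rw [← Finset.sum_subset
          (show Finset.Ico (n - d) (m + n - 2 * d) ⊆ Finset.range (m + n - 2 * d) from
            fun x hx => Finset.mem_range.mpr (Finset.mem_Ico.mp hx).2)
          (fun x hx1 hx2 => by
            have h1 : x < n - d := by
              have h2 := Finset.mem_range.mp hx1
              by_contra hcon
              exact hx2 (Finset.mem_Ico.mpr ⟨by omega, h2⟩)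
            rw [if_pos h1, zero_smul])]
      rw [Finset.sum_Ico_eq_sum_range,
        show m + n - 2 * d - (n - d) = m - d from by omega, ← Finset.sum_range_reflect]
      rw [add_pow, Finset.sum_mul]
      rw [← Finset.sum_subset (Finset.range_subset_range.mpr
          (show m - d - 1 - ((i : ℕ) - (n - d)) + 1 ≤ m - d from by omega))
          (fun x hx1 hx2 => by
        have h1 : ¬x < m - d - 1 - ((i : ℕ) - (n - d)) + 1 :=
          fun h => hx2 (Finset.mem_range.mpr h)
        have h2 := Finset.mem_range.mp hx1
        rw [show m - d - 1 - (n - d + (m - d - 1 - x) - (n - d)) = x from by omega,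
          Nat.choose_eq_zero_of_lt (by omega)]
        simp)]
      refine Finset.sum_congr rfl fun x hx => ?_
      have hx' := Finset.mem_range.mp hx
      rw [if_neg (show ¬n - d + (m - d - 1 - x) < n - d from by omega), rpN,
        if_neg (show ¬n - d + (m - d - 1 - x) < n - d from by omega)]
      rw [show m - d - 1 - (n - d + (m - d - 1 - x) - (n - d)) = x from by omega]
      rw [show n - d + (m - d - 1 - x) - (i : ℕ)
          = m - d - 1 - ((i : ℕ) - (n - d)) - x from by omega]
      rw [smul_eq_C_mul, map_mul, C_pow, map_natCast]
      ring
  have hdetP : P.det = 1 := by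
    have htri : P.BlockTriangular id := by
      intro i j hji
      have hji' : (j : ℕ) < (i : ℕ) := hji
      have hilt := i.isLt
      simp only [hP, Matrix.of_apply]
      by_cases h1 : (i : ℕ) < n - d
      · rw [if_pos h1, if_pos (by omega), Nat.choose_eq_zero_of_lt (by omega),
          Nat.cast_zero, zero_mul]
      · rw [if_neg h1]
        by_cases h2 : (j : ℕ) < n - d
        · rw [if_pos h2]
        · rw [if_neg h2, Nat.choose_eq_zero_of_lt (by omega), Nat.cast_zero, zero_mul]
    rw [Matrix.det_of_upperTriangular htri]
    refine Finset.prod_eq_one fun i _ => ?_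
    simp only [hP, Matrix.of_apply]
    by_cases h1 : (i : ℕ) < n - d
    · rw [if_pos h1, if_pos h1, Nat.choose_self, Nat.cast_one, Nat.sub_self, pow_zero,
        mul_one]
    · rw [if_neg h1, if_neg h1, Nat.choose_self, Nat.cast_one, Nat.sub_self, pow_zero,
        mul_one]
  have hmul : (Matrix.of fun i j : Fin (m + n - 2 * d) =>
      if (j : ℕ) = m + n - 2 * d - 1 then
        ((rpN m n d F G (i : ℕ)).comp (X + C t)).coeff 0
      else ((rpN m n d F G (i : ℕ)).comp (X + C t)).coeff (m + n - d - 1 - (j : ℕ)))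
      = P * ME m n d (F.comp (X + C t)) (G.comp (X + C t)) 0 := by
    refine Matrix.ext fun i j => ?_
    rw [Matrix.mul_apply]
    have hsum : ∀ s : ℕ,
        (∑ i' : Fin (m + n - 2 * d),
          P i i' * (rpN m n d (F.comp (X + C t)) (G.comp (X + C t)) (i' : ℕ)).coeff s)
        = ((rpN m n d F G (i : ℕ)).comp (X + C t)).coeff s := by
      intro s
      rw [key i, finset_sum_coeff]
      exact Finset.sum_congr rfl fun i' _ => by rw [coeff_smul, smul_eq_mul]
    by_cases hj : (j : ℕ) = m + n - 2 * d - 1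
    · simp only [Matrix.of_apply, ME, hj, eq_self_iff_true, if_true]
      exact (hsum 0).symm
    · simp only [Matrix.of_apply, ME, hj, if_false]
      exact (hsum _).symm
  rw [hmul, Matrix.det_mul, hdetP, one_mul]

lemma lemT (m n d : ℕ) (hm : d < m) (hn : d < n) (F G : B[X])
    (hF : F.natDegree ≤ m) (hG : G.natDegree ≤ n) (t : B) :
    (ME m n d (F.comp (X + C t)) (G.comp (X + C t)) 0).det
      = ∑ k ∈ Finset.range (m + n - d), t ^ k * (ME m n d F G k).det := by
  rw [step1 m n d hm hn F G t]
  exact step2 m n d hm hn (fun i => rpN m n d F G (i : ℕ))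
    (fun i => rpN_natDegree_le m n d F G hm hn hF hG _) t

lemma coeff_X_sub_C_pow' (c : B) (mm r : ℕ) :
    ((X - C c) ^ mm).coeff r = (-c) ^ (mm - r) * (mm.choose r : B) := by
  rw [sub_eq_add_neg, ← C_neg, coeff_X_add_C_pow]

lemma ME_map {B' : Type*} [CommRing B'] (m n d : ℕ) (f g : B[X]) (φ : B →+* B') (k : ℕ) :
    ME m n d (f.map φ) (g.map φ) k = φ.mapMatrix (ME m n d f g k) := by
  refine Matrix.ext fun i j => ?_
  simp only [ME, Matrix.of_apply, RingHom.mapMatrix_apply, Matrix.map_apply]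
  have hrp : rpN m n d (f.map φ) (g.map φ) (i : ℕ) = (rpN m n d f g (i : ℕ)).map φ := by
    rw [rpN, rpN]
    split_ifs with h
    · rw [Polynomial.map_mul, Polynomial.map_pow, map_X]
    · rw [Polynomial.map_mul, Polynomial.map_pow, map_X]
  rw [hrp]
  split_ifs with h
  · rw [coeff_map]
  · rw [coeff_map]

end SresAux

open SresAux in
theorem subresultant_mem_shifted_subring (m n d : ℕ) (hd : d < min m n) :
    ∃ q : MvPolynomial (Fin 2) ℤ,
      MvPolynomial.aeval
        ![X - C (MvPolynomial.X 0), X - C (MvPolynomial.X 1)] q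
        = Sres m n d
            ((X - C (MvPolynomial.X 0 : MvPolynomial (Fin 2) ℤ)) ^ m)
            ((X - C (MvPolynomial.X 1 : MvPolynomial (Fin 2) ℤ)) ^ n) := by
  classical
  have hm : d < m := lt_of_lt_of_le hd (min_le_left _ _)
  have hn : d < n := lt_of_lt_of_le hd (min_le_right _ _)
  set a : MvPolynomial (Fin 2) ℤ := MvPolynomial.X 0 with ha
  set b : MvPolynomial (Fin 2) ℤ := MvPolynomial.X 1 with hb
  set f : Polynomial (MvPolynomial (Fin 2) ℤ) := (X - C a) ^ m with hf
  set g : Polynomial (MvPolynomial (Fin 2) ℤ) := (X - C b) ^ n with hg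
  set θ : MvPolynomial (Fin 2) ℤ →ₐ[ℤ] Polynomial (MvPolynomial (Fin 2) ℤ) :=
    MvPolynomial.aeval ![C a - X, C b - X] with hθ
  refine ⟨MvPolynomial.bind₁ ![-(MvPolynomial.X 0), -(MvPolynomial.X 1)]
    ((ME m n d f g 0).det), ?_⟩
  rw [MvPolynomial.aeval_bind₁]
  have hv : (fun i => MvPolynomial.aeval ![X - C a, X - C b]
      ((![-(MvPolynomial.X 0), -(MvPolynomial.X 1)] :
        Fin 2 → MvPolynomial (Fin 2) ℤ) i)) = ![C a - X, C b - X] := by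
    funext i
    fin_cases i <;> simp [ha, hb, neg_sub]
  rw [hv]
  -- now the main chain
  have hfd : f.natDegree ≤ m :=
    le_trans natDegree_pow_le (le_trans (Nat.mul_le_mul_left m (natDegree_X_sub_C_le a))
      (by omega))
  have hgd : g.natDegree ≤ n :=
    le_trans natDegree_pow_le (le_trans (Nat.mul_le_mul_left n (natDegree_X_sub_C_le b))
      (by omega))
  have hLf : ∀ r, θ (f.coeff r)
      = (X - C a) ^ (m - r) * (m.choose r : Polynomial (MvPolynomial (Fin 2) ℤ)) := by
    intro r
    rw [hf, coeff_X_sub_C_pow', map_mul, map_pow, map_neg, map_natCast]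
    have : θ a = C a - X := by simp [hθ, ha]
    rw [this, neg_sub]
  have hLg : ∀ r, θ (g.coeff r)
      = (X - C b) ^ (n - r) * (n.choose r : Polynomial (MvPolynomial (Fin 2) ℤ)) := by
    intro r
    rw [hg, coeff_X_sub_C_pow', map_mul, map_pow, map_neg, map_natCast]
    have : θ b = C b - X := by simp [hθ, hb]
    rw [this, neg_sub]
  have hRf : ∀ r, ((f.map (Polynomial.C (R := MvPolynomial (Fin 2) ℤ))).comp
        (X + C X)).coeff r
      = (X - C a) ^ (m - r) * (m.choose r : Polynomial (MvPolynomial (Fin 2) ℤ)) := by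
    intro r
    rw [show (f.map (Polynomial.C (R := MvPolynomial (Fin 2) ℤ))).comp (X + C X)
        = (X + C (X - C a)) ^ m from by
      rw [hf, Polynomial.map_pow, Polynomial.map_sub, map_X, map_C, pow_comp, sub_comp,
        X_comp, C_comp]
      congr 1
      rw [map_sub]
      ring]
    rw [coeff_X_add_C_pow]
  have hRg : ∀ r, ((g.map (Polynomial.C (R := MvPolynomial (Fin 2) ℤ))).comp
        (X + C X)).coeff r
      = (X - C b) ^ (n - r) * (n.choose r : Polynomial (MvPolynomial (Fin 2) ℤ)) := by
    intro r
    rw [show (g.map (Polynomial.C (R := MvPolynomial (Fin 2) ℤ))).comp (X + C X)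
        = (X + C (X - C b)) ^ n from by
      rw [hg, Polynomial.map_pow, Polynomial.map_sub, map_X, map_C, pow_comp, sub_comp,
        X_comp, C_comp]
      congr 1
      rw [map_sub]
      ring]
    rw [coeff_X_add_C_pow]
  have hθmat : θ.toRingHom.mapMatrix (ME m n d f g 0)
      = ME m n d ((f.map Polynomial.C).comp (X + C X))
          ((g.map Polynomial.C).comp (X + C X)) 0 := by
    refine Matrix.ext fun i j => ?_
    simp only [RingHom.mapMatrix_apply, Matrix.map_apply, ME, Matrix.of_apply]
    have hcoeff : ∀ s, θ ((rpN m n d f g (i : ℕ)).coeff s)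
        = (rpN m n d ((f.map Polynomial.C).comp (X + C X))
            ((g.map Polynomial.C).comp (X + C X)) (i : ℕ)).coeff s := by
      intro s
      rw [rpN, rpN]
      split_ifs with h
      · rw [mul_comm, coeff_mul_X_pow',
          mul_comm (X ^ (n - d - 1 - (i : ℕ))) ((f.map Polynomial.C).comp (X + C X)),
          coeff_mul_X_pow', apply_ite θ, map_zero]
        split_ifs with h2
        · rw [hLf, hRf]
        · rfl
      · rw [mul_comm, coeff_mul_X_pow',
          mul_comm (X ^ (m - d - 1 - ((i : ℕ) - (n - d))))
            ((g.map Polynomial.C).comp (X + C X)),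
          coeff_mul_X_pow', apply_ite θ, map_zero]
        split_ifs with h2
        · rw [hLg, hRg]
        · rfl
    split_ifs with h
    · exact hcoeff 0
    · exact hcoeff _
  have main : θ ((ME m n d f g 0).det) = Sres m n d f g := by
    rw [show θ ((ME m n d f g 0).det) = (θ.toRingHom.mapMatrix (ME m n d f g 0)).det from
      RingHom.map_det _ _]
    rw [hθmat]
    rw [lemT m n d hm hn (f.map Polynomial.C) (g.map Polynomial.C)
      (le_trans natDegree_map_le hfd) (le_trans natDegree_map_le hgd) X]
    rw [lemA m n d hm hn f g hfd hgd]
    refine Finset.sum_congr rfl fun k _ => ?_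
    rw [ME_map m n d f g (Polynomial.C : MvPolynomial (Fin 2) ℤ →+* _) k,
      ← RingHom.map_det]
  exact main
end

section
/- For α ≠ β in a field K of characteristic 0, and natural numbers m, n, d with 0 ≤ d < min(m,n), the leading coefficient (coefficient of x^d) of the polynomial ∑_{j=0}^{d} C(n-d+j-1, j)·C(m-j-1, d-j)·(x-α)^j·(x-β)^(d-j) equals C(m+n-d-1, d). -/
open Polynomial

/-- Dual Vandermonde / hockey-stick convolution:
`∑_{j=0}^{d} C(a+j, j) * C(b-j, d-j) = C(a+b+1, d)` for `d ≤ b`. -/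
lemma bernstein_nat_key : ∀ a b d : ℕ, d ≤ b →
    ∑ j ∈ Finset.range (d + 1), (a + j).choose j * (b - j).choose (d - j)
      = (a + b + 1).choose d := by
  intro a
  induction a with
  | zero =>
    intro b d hdb
    have h1 : ∑ j ∈ Finset.range (d + 1), (0 + j).choose j * (b - j).choose (d - j)
        = ∑ j ∈ Finset.range (d + 1), (j + (b - d)).choose (b - d) := by
      rw [← Finset.sum_range_reflect]
      apply Finset.sum_congr rfl
      intro j hj
      simp only [Finset.mem_range] at hj
      have hj' : j ≤ d := by omega
      rw [zero_add, Nat.choose_self, one_mul]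
      have e1 : b - (d + 1 - 1 - j) = j + (b - d) := by omega
      have e2 : d - (d + 1 - 1 - j) = j := by omega
      rw [e1, e2]
      exact Nat.choose_symm_add
    rw [h1, Nat.sum_range_add_choose d (b - d)]
    have e3 : d + (b - d) + 1 = b + 1 := by omega
    rw [e3]
    have e4 : b - d + 1 = (b + 1) - d := by omega
    rw [e4, Nat.choose_symm (by omega), zero_add]
  | succ a iha =>
    intro b
    intro d
    induction d generalizing b with
    | zero => intro _; simp
    | succ d ihd =>
      intro hdb
      rw [Finset.sum_range_succ']
      have hF0 : (a + 1 + 0).choose 0 * (b - 0).choose (d + 1 - 0) = b.choose (d + 1) := by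
        simp
      rw [hF0]
      have hsplit : ∀ i ∈ Finset.range (d + 1),
          (a + 1 + (i + 1)).choose (i + 1) * (b - (i + 1)).choose (d + 1 - (i + 1))
          = (a + 1 + i).choose i * (b - 1 - i).choose (d - i)
            + (a + (i + 1)).choose (i + 1) * (b - (i + 1)).choose (d + 1 - (i + 1)) := by
        intro i hi
        have e1 : a + 1 + (i + 1) = (a + 1 + i) + 1 := by omega
        have e2 : b - (i + 1) = b - 1 - i := by omega
        have e3 : d + 1 - (i + 1) = d - i := by omega
        have e4 : a + (i + 1) = a + 1 + i := by omega
        rw [e1, Nat.choose_succ_succ, add_mul, e2, e3, e4]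
      rw [Finset.sum_congr rfl hsplit, Finset.sum_add_distrib]
      have hdb' : d ≤ b - 1 := by omega
      rw [ihd (b - 1) hdb']
      have key2 : (∑ i ∈ Finset.range (d + 1),
          (a + (i + 1)).choose (i + 1) * (b - (i + 1)).choose (d + 1 - (i + 1)))
          + b.choose (d + 1) = (a + b + 1).choose (d + 1) := by
        have h := iha b (d + 1) hdb
        rw [Finset.sum_range_succ'] at h
        simpa using h
      have e5 : a + 1 + (b - 1) + 1 = a + b + 1 := by omega
      rw [e5, add_assoc, key2, show a + 1 + b + 1 = (a + b + 1) + 1 from by omega]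
      exact (Nat.choose_succ_succ _ _).symm

theorem leading_coeff_of_bernstein_sum {K : Type*} [Field K] [CharZero K]
    (α β : K) (hαβ : α ≠ β) (m n d : ℕ) (hm : d < m) (hn : d < n) :
    (∑ j ∈ Finset.range (d + 1),
      C ((Nat.choose (n - d + j - 1) j : K) * (Nat.choose (m - j - 1) (d - j) : K)) *
        (X - C α) ^ j * (X - C β) ^ (d - j)).coeff d
      = (Nat.choose (m + n - d - 1) d : K) := by
  have hstep : ∀ j ∈ Finset.range (d + 1),
      (C ((Nat.choose (n - d + j - 1) j : K) * (Nat.choose (m - j - 1) (d - j) : K)) *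
        (X - C α) ^ j * (X - C β) ^ (d - j)).coeff d
      = ((Nat.choose (n - d - 1 + j) j * Nat.choose (m - 1 - j) (d - j) : ℕ) : K) := by
    intro j hj
    simp only [Finset.mem_range] at hj
    have hj' : j ≤ d := by omega
    have hmonic : ((X - C α) ^ j * (X - C β) ^ (d - j)).Monic :=
      ((monic_X_sub_C α).pow j).mul ((monic_X_sub_C β).pow (d - j))
    have hdeg : ((X - C α) ^ j * (X - C β) ^ (d - j)).natDegree = d := by
      rw [((monic_X_sub_C α).pow j).natDegree_mul ((monic_X_sub_C β).pow (d - j))]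
      simp only [natDegree_pow, natDegree_X_sub_C]
      omega
    have hc1 : ((X - C α) ^ j * (X - C β) ^ (d - j)).coeff d = 1 := by
      have h := hmonic.coeff_natDegree
      rwa [hdeg] at h
    rw [mul_assoc, coeff_C_mul, hc1, mul_one]
    have e1 : n - d + j - 1 = n - d - 1 + j := by omega
    have e2 : m - j - 1 = m - 1 - j := by omega
    rw [e1, e2]
    push_cast
    ring
  rw [finset_sum_coeff, Finset.sum_congr rfl hstep, ← Nat.cast_sum,
    bernstein_nat_key (n - d - 1) (m - 1) d (by omega),
    show n - d - 1 + (m - 1) + 1 = m + n - d - 1 from by omega]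
end

section
/- Let m, n, d be natural numbers with 1 ≤ d < min(m,n) and suppose p := m+n-d-1 is prime. Then p divides the integer ∏_{i=1}^{d} (i-1)!·(m+n-d-i)! / ((m-i)!·(n-i)!). -/
theorem prime_divides_principal_subresultant_product (m n d : ℕ)
    (hd : 1 ≤ d) (hm : d < m) (hn : d < n) (hp : (m + n - d - 1).Prime) :
    ∀ z : ℤ,
      (z : ℚ) = ∏ i ∈ Finset.Icc 1 d,
        ((i - 1).factorial * (m + n - d - i).factorial : ℚ) /
        ((m - i).factorial * (n - i).factorial) →
      ((m + n - d - 1 : ℕ) : ℤ) ∣ z := by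
  intro z hz
  set p := m + n - d - 1 with hpdef
  set N : ℕ := ∏ i ∈ Finset.Icc 1 d, (i - 1).factorial * (m + n - d - i).factorial with hN
  set D : ℕ := ∏ i ∈ Finset.Icc 1 d, (m - i).factorial * (n - i).factorial with hD
  have hDne : ∀ i ∈ Finset.Icc 1 d, ((m - i).factorial * (n - i).factorial : ℚ) ≠ 0 := by
    intro i _; positivity
  have key : (z : ℚ) * (D : ℚ) = (N : ℚ) := by
    rw [hz, hD, hN]
    push_cast
    rw [Finset.prod_div_distrib]
    rw [div_mul_cancel₀]
    exact Finset.prod_ne_zero_iff.mpr (fun i hi => by positivity)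
  have keyZ : z * (D : ℤ) = (N : ℤ) := by exact_mod_cast key
  have hpN : p ∣ N := by
    have h1 : (1 : ℕ) ∈ Finset.Icc 1 d := Finset.mem_Icc.mpr ⟨le_refl 1, hd⟩
    have : p ∣ (1 - 1).factorial * (m + n - d - 1).factorial := by
      exact Dvd.dvd.mul_left (Nat.dvd_factorial hp.pos le_rfl) _
    exact dvd_trans this (Finset.dvd_prod_of_mem _ h1)
  have hpD : ¬ p ∣ D := by
    intro hdvd
    obtain ⟨i, hi, hdvd'⟩ := hp.prime.exists_mem_finset_dvd hdvd
    have hi' := Finset.mem_Icc.mp hi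
    rcases hp.prime.dvd_mul.mp hdvd' with h | h
    · have := (Nat.Prime.dvd_factorial hp).mp h
      omega
    · have := (Nat.Prime.dvd_factorial hp).mp h
      omega
  have : (p : ℤ) ∣ z * (D : ℤ) := by
    rw [keyZ]
    exact_mod_cast Int.natCast_dvd_natCast.mpr hpN
  have hpZ : Prime (p : ℤ) := Nat.prime_iff_prime_int.mp hp
  rcases hpZ.dvd_mul.mp this with h | h
  · exact h
  · exact absurd (Int.natCast_dvd_natCast.mp h) hpD
end

section
/- Let K be a field of characteristic 0, α ≠ β ∈ K, and m, n, d natural numbers with 0 ≤ d < min(m,n). Write Sres_d((x-α)^m,(x-β)^n) = ∑_{k=0}^d s_k x^k and set s_{d+1} = 0. Then for k = d-1 down to 0: (d-k)(m+n-d-k-1)·s_k = -(k+1)·( ((n-k-1)α + (m-k-1)β)·s_{k+1} + (k+2)·α·β·s_{k+2} ). -/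
open Polynomial

namespace SubresAux

set_option linter.unusedSectionVars false
set_option linter.unreachableTactic false
set_option linter.unusedTactic false
set_option maxHeartbeats 1000000

variable {K : Type*} [Field K] [CharZero K]


noncomputable def Lop (a b A B c : K) (u : K[X]) : K[X] :=
  (X - C a) * (X - C b) * derivative (derivative u)
    + (C A * X + C B) * derivative u + C c * u

lemma Lop_add (a b A B c : K) (u v : K[X]) :
    Lop a b A B c (u + v) = Lop a b A B c u + Lop a b A B c v := by
  simp only [Lop, derivative_add]; ring

lemma Lop_comm (a b A B c : K) (u : K[X]) :
    Lop a b A B c u = Lop b a A B c u := by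
  simp only [Lop]; ring

lemma coeff_Lop (a b A B c : K) (u : K[X]) (k : ℕ) :
    (Lop a b A B c u).coeff k
      = ((k : K) * ((k : K) - 1) + A * (k : K) + c) * u.coeff k
        + (((k : K) + 1) * (-(a + b) * (k : K) + B)) * u.coeff (k + 1)
        + (a * b * ((k : K) + 1) * ((k : K) + 2)) * u.coeff (k + 2) := by
  have hexp : Lop a b A B c u
      = X * (X * derivative (derivative u)) - C (a + b) * (X * derivative (derivative u))
        + C (a * b) * derivative (derivative u)
        + (C A * (X * derivative u) + C B * derivative u) + C c * u := by
    simp only [Lop, C_add, C_mul]; ring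
  rw [hexp]
  have hX0 : ∀ p : K[X], (X * p).coeff 0 = 0 := by
    intro p; rw [mul_coeff_zero, coeff_X_zero, zero_mul]
  have hd2 : ∀ t : ℕ, (derivative (derivative u)).coeff t
      = u.coeff (t + 2) * ((t : K) + 1) * ((t : K) + 2) := by
    intro t
    rw [coeff_derivative, coeff_derivative]
    push_cast
    ring
  match k with
  | 0 =>
    simp only [coeff_add, coeff_sub, coeff_C_mul, hX0, coeff_derivative, hd2]
    push_cast
    ring
  | 1 =>
    have h1 : ∀ p : K[X], (X * (X * p)).coeff 1 = 0 := by
      intro p; rw [show (1:ℕ) = 0 + 1 from rfl, coeff_X_mul, hX0]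
    simp only [coeff_add, coeff_sub, coeff_C_mul, h1, coeff_X_mul, coeff_derivative, hd2]
    push_cast
    ring
  | (t + 2) =>
    have h1 : ∀ p : K[X], (X * (X * p)).coeff (t + 2) = p.coeff t := by
      intro p; rw [show t + 2 = (t + 1) + 1 from rfl, coeff_X_mul, coeff_X_mul]
    have h2 : ∀ p : K[X], (X * p).coeff (t + 2) = p.coeff (t + 1) := by
      intro p; rw [show t + 2 = (t + 1) + 1 from rfl, coeff_X_mul]
    simp only [coeff_add, coeff_sub, coeff_C_mul, h1, h2, coeff_derivative, hd2]
    push_cast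
    ring

lemma X_sub_C_mul_derivative_pow (γ : K) (s : ℕ) :
    (X - C γ) * derivative ((X - C γ) ^ s) = C (s : K) * (X - C γ) ^ s := by
  cases s with
  | zero => simp
  | succ t =>
    rw [derivative_pow_succ, derivative_X_sub_C, mul_one]
    rw [show (X - C γ) * (C ((t:K) + 1) * (X - C γ) ^ t)
        = C ((t:K) + 1) * (X - C γ) ^ (t + 1) by ring]
    push_cast
    ring

lemma X_sub_C_mul_derivative2_pow (γ : K) (s : ℕ) :
    (X - C γ) * derivative (derivative ((X - C γ) ^ s))
      = C ((s : K) - 1) * derivative ((X - C γ) ^ s) := by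
  cases s with
  | zero => simp
  | succ t =>
    rw [derivative_pow_succ, derivative_X_sub_C, mul_one, derivative_mul, derivative_C, zero_mul,
      zero_add]
    rw [show (X - C γ) * (C ((t:K) + 1) * derivative ((X - C γ) ^ t))
        = C ((t:K) + 1) * ((X - C γ) * derivative ((X - C γ) ^ t)) by ring,
      X_sub_C_mul_derivative_pow]
    push_cast
    ring

lemma Lop_key (r ρ : ℕ) (γ δ c : K) (u : K[X]) :
    Lop γ δ (2 - (r : K) - (ρ : K)) (((ρ : K) - 1) * γ + ((r : K) - 1) * δ) c
        (u * (X - C γ) ^ r)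
      = Lop γ δ ((r : K) - (ρ : K) + 2) (((ρ : K) - 1) * γ - ((r : K) + 1) * δ)
          (c - (r : K) * ((ρ : K) - 1)) u * (X - C γ) ^ r := by
  have hp : (X - C γ) ≠ 0 := X_sub_C_ne_zero γ
  refine mul_left_cancel₀ (pow_ne_zero 2 hp) ?_
  have h1 := X_sub_C_mul_derivative_pow γ r
  have h2 := X_sub_C_mul_derivative2_pow γ r
  have h2' : (X - C γ) * derivative (derivative ((X - C γ) ^ r))
      = (C (r:K) - 1) * derivative ((X - C γ) ^ r) := by
    rw [h2, C_sub, C_1]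
  simp only [Lop, derivative_mul, derivative_add, C_add, C_sub, C_mul, C_1, map_ofNat]
  linear_combination (2 * (X - C γ)^2 * (X - C δ) * derivative u
      + (C ((r:K)) - 1) * (X - C γ) * (X - C δ) * u
      + (X - C γ) * ((2 - C (r:K) - C (ρ:K)) * X + ((C (ρ:K) - 1) * C γ + (C (r:K) - 1) * C δ)) * u) * h1
    + ((X - C γ)^2 * (X - C δ) * u) * h2' 



/-- step operator injectivity: (X - C γ) * U' + C r * U = 0 → U = 0 (r ≥ 1). -/
lemma step_inj (γ : K) (r : ℕ) (hr : 0 < r) (U : K[X])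
    (h : (X - C γ) * derivative U + C (r : K) * U = 0) : U = 0 := by
  by_contra hU
  set t := U.natDegree with ht
  have hc : ((X - C γ) * derivative U + C (r : K) * U).coeff t
      = ((t : K) + (r : K)) * U.coeff t := by
    have hXd : (X * derivative U).coeff t = (t : K) * U.coeff t := by
      cases t with
      | zero => rw [mul_coeff_zero, coeff_X_zero, zero_mul, Nat.cast_zero, zero_mul]
      | succ s =>
        rw [coeff_X_mul, coeff_derivative]
        push_cast; ring
    have hdt : (derivative U).coeff t = 0 := by
      rw [coeff_derivative, ht, coeff_natDegree_succ_eq_zero, zero_mul]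
    rw [coeff_add, coeff_C_mul, sub_mul, coeff_sub, hXd, coeff_C_mul, hdt, mul_zero, sub_zero]
    ring
  rw [h, coeff_zero] at hc
  have h1 : ((t : K) + (r : K)) ≠ 0 := by
    have : ((t + r : ℕ) : K) ≠ 0 := Nat.cast_ne_zero.mpr (by omega)
    push_cast at this; exact this
  have h2 : U.coeff t ≠ 0 := by
    rw [ht]; exact fun hh => hU (leadingCoeff_eq_zero.mp hh)
  exact (mul_ne_zero h1 h2) hc.symm

lemma uniq (α β : K) (hαβ : α ≠ β) :
    ∀ d m n : ℕ, ∀ U V : K[X], d < m → d < n →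
    (∀ E, n - d ≤ E → U.coeff E = 0) → (∀ E, m - d ≤ E → V.coeff E = 0) →
    (∀ E, d ≤ E → (U * (X - C α) ^ m + V * (X - C β) ^ n).coeff E = 0) →
    U = 0 ∧ V = 0 := by
  intro d
  induction d with
  | zero =>
    intro m n U V hm hn hU hV hE
    have hz : U * (X - C α) ^ m + V * (X - C β) ^ n = 0 := by
      ext E; rw [coeff_zero]; exact hE E (Nat.zero_le E)
    have hcop : IsCoprime ((X - C α) ^ m) ((X - C β) ^ n) :=
      (isCoprime_X_sub_C_of_isUnit_sub (IsUnit.mk0 _ (sub_ne_zero.mpr hαβ))).pow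
    have hdvd : (X - C α) ^ m ∣ V * (X - C β) ^ n := by
      refine ⟨-U, ?_⟩
      linear_combination hz
    have hdvdV : (X - C α) ^ m ∣ V := hcop.dvd_of_dvd_mul_right hdvd
    have hV0 : V = 0 := by
      by_contra hV0
      have hle : ((X - C α) ^ m).degree ≤ V.degree := degree_le_of_dvd hdvdV hV0
      rw [degree_pow, degree_X_sub_C] at hle
      have hlt : V.degree < (m : WithBot ℕ) := by
        apply (degree_lt_iff_coeff_zero V m).mpr
        intro E hEm; exact hV E (by omega)
      simp only [nsmul_eq_mul, mul_one] at hle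
      exact absurd hle (not_le.mpr hlt)
    refine ⟨?_, hV0⟩
    rw [hV0, zero_mul, add_zero] at hz
    rcases mul_eq_zero.mp hz with h | h
    · exact h
    · exact absurd h (pow_ne_zero m (X_sub_C_ne_zero α))
  | succ d ih =>
    intro m n U V hm hn hU hV hE
    obtain ⟨m', rfl⟩ : ∃ m', m = m' + 1 := ⟨m - 1, by omega⟩
    obtain ⟨n', rfl⟩ : ∃ n', n = n' + 1 := ⟨n - 1, by omega⟩
    set U₁ := (X - C α) * derivative U + C ((m' + 1 : ℕ) : K) * U with hU₁
    set V₁ := (X - C β) * derivative V + C ((n' + 1 : ℕ) : K) * V with hV₁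
    have hder : derivative (U * (X - C α) ^ (m' + 1) + V * (X - C β) ^ (n' + 1))
        = U₁ * (X - C α) ^ m' + V₁ * (X - C β) ^ n' := by
      rw [derivative_add, derivative_mul, derivative_mul, derivative_pow_succ,
        derivative_pow_succ, derivative_X_sub_C, derivative_X_sub_C, hU₁, hV₁]
      push_cast
      ring
    have hcoeff1 : ∀ (γ : K) (r : ℕ) (W : K[X]) (b : ℕ), 1 ≤ b →
        (∀ E, b ≤ E → W.coeff E = 0) →
        (∀ E, b ≤ E → ((X - C γ) * derivative W + C ((r : ℕ) : K) * W).coeff E = 0) := by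
      intro γ r W b hb hW E hEb
      have hE1 : (X * derivative W).coeff E = (E : K) * W.coeff E := by
        obtain ⟨E', rfl⟩ : ∃ E', E = E' + 1 := ⟨E - 1, by omega⟩
        rw [coeff_X_mul, coeff_derivative]; push_cast; ring
      rw [coeff_add, coeff_C_mul, sub_mul, coeff_sub, hE1, coeff_C_mul, coeff_derivative,
        hW E hEb, hW (E + 1) (by omega)]
      simp
    have hu1 : ∀ E, n' - d ≤ E → U₁.coeff E = 0 := by
      intro E hEb
      exact hcoeff1 α (m' + 1) U (n' - d) (by omega) (fun E' h' => hU E' (by omega)) E hEb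
    have hv1 : ∀ E, m' - d ≤ E → V₁.coeff E = 0 := by
      intro E hEb
      exact hcoeff1 β (n' + 1) V (m' - d) (by omega) (fun E' h' => hV E' (by omega)) E hEb
    have hE1 : ∀ E, d ≤ E → (U₁ * (X - C α) ^ m' + V₁ * (X - C β) ^ n').coeff E = 0 := by
      intro E hEd
      rw [← hder, coeff_derivative, hE (E + 1) (by omega), zero_mul]
    obtain ⟨hU₁0, hV₁0⟩ := ih m' n' U₁ V₁ (by omega) (by omega) hu1 hv1 hE1
    exact ⟨step_inj α (m' + 1) (by omega) U hU₁0,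
           step_inj β (n' + 1) (by omega) V hV₁0⟩



lemma exists_rep (α β : K) (m n d : ℕ) (hm : d < m) (hn : d < n) :
    ∃ u v : K[X],
      (∀ E, n - d ≤ E → u.coeff E = 0) ∧ (∀ E, m - d ≤ E → v.coeff E = 0) ∧
      Sres m n d ((X - C α) ^ m) ((X - C β) ^ n)
        = u * (X - C α) ^ m + v * (X - C β) ^ n ∧
      (∀ E, d < E → (Sres m n d ((X - C α) ^ m) ((X - C β) ^ n)).coeff E = 0) := by
  set f : K[X] := (X - C α) ^ m with hf
  set g : K[X] := (X - C β) ^ n with hg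
  have hfd : f.natDegree = m := by
    rw [hf, natDegree_pow, natDegree_X_sub_C, mul_one]
  have hgd : g.natDegree = n := by
    rw [hg, natDegree_pow, natDegree_X_sub_C, mul_one]
  set N : ℕ := m + n - 2 * d with hNdef
  have hN2 : 2 ≤ N := by omega
  set T : ℕ := m + n - d with hTdef
  set h : Fin N → K[X] := fun i =>
    if (i : ℕ) < n - d then X ^ (n - d - 1 - (i : ℕ)) * f
    else X ^ (m - d - 1 - ((i : ℕ) - (n - d))) * g with hh
  set BK : Matrix (Fin N) (Fin N) K :=
    Matrix.of (fun i j => (h i).coeff (m + n - d - 1 - (j : ℕ))) with hBK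
  set last : Fin N := ⟨N - 1, by omega⟩ with hlast
  -- degrees of h i
  have hdeg : ∀ i, (h i).natDegree < T := by
    intro i
    rw [hh]
    dsimp only
    split_ifs with hi
    · calc (X ^ (n - d - 1 - (i : ℕ)) * f).natDegree
          ≤ (X ^ (n - d - 1 - (i : ℕ)) : K[X]).natDegree + f.natDegree := natDegree_mul_le
        _ = (n - d - 1 - (i : ℕ)) + m := by rw [natDegree_X_pow, hfd]
        _ < T := by omega
    · calc (X ^ (m - d - 1 - ((i : ℕ) - (n - d))) * g).natDegree
          ≤ (X ^ (m - d - 1 - ((i : ℕ) - (n - d))) : K[X]).natDegree + g.natDegree :=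
            natDegree_mul_le
        _ = (m - d - 1 - ((i : ℕ) - (n - d))) + n := by rw [natDegree_X_pow, hgd]
        _ < T := by omega
  -- the Sres matrix is BK.map C with last column updated to h
  have hSres : Sres m n d f g = ((BK.map C).updateCol last h).det := by
    unfold Sres
    refine congrArg Matrix.det (Matrix.ext fun i j => ?_)
    by_cases hj : j = last
    · subst hj
      rw [Matrix.updateCol_self, Matrix.of_apply]
      have hj' : ((last : Fin N) : ℕ) = m + n - 2 * d - 1 := rfl
      rw [hh]
      dsimp only
      split_ifs with hi <;> rfl
    · have hj' : (j : ℕ) ≠ m + n - 2 * d - 1 := by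
        intro hc
        exact hj (Fin.ext hc)
      rw [Matrix.updateCol_ne hj, Matrix.map_apply, Matrix.of_apply, hBK,
        Matrix.of_apply, hh]
      dsimp only
      have hjlt : (j : ℕ) < N := j.isLt
      have hilt : (i : ℕ) < N := i.isLt
      by_cases hi : (i : ℕ) < n - d
      · rw [if_pos hi, if_pos hi, coeff_X_pow_mul', apply_ite C, C_0]
        split_ifs with h1 h2 h3
        all_goals first
        | rfl
        | (congr 2; omega)
        | (exfalso; omega)
      · rw [if_neg hi, if_neg hi, coeff_X_pow_mul', apply_ite C, C_0]
        split_ifs with h1 h2 h3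
        all_goals first
        | rfl
        | (congr 2; omega)
        | (exfalso; omega)
  -- expansion of P as sum of X^t with determinant coefficients
  set Dt : ℕ → K := fun t => (BK.updateCol last (fun i => (h i).coeff t)).det with hDt
  have hP : Sres m n d f g = ∑ t ∈ Finset.range T, C (Dt t) * X ^ t := by
    rw [hSres, ← Matrix.cramer_apply]
    have hvec : h = ∑ t ∈ Finset.range T, (X ^ t : K[X]) • (fun i => C ((h i).coeff t)) := by
      funext i
      rw [Finset.sum_apply]
      have := (h i).as_sum_range' T (hdeg i)
      rw [this]
      refine Finset.sum_congr rfl (fun t _ => ?_)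
      rw [Pi.smul_apply, smul_eq_mul, ← C_mul_X_pow_eq_monomial]
      ring
    rw [hvec, map_sum]
    rw [Finset.sum_apply]
    refine Finset.sum_congr rfl (fun t _ => ?_)
    rw [LinearMap.map_smul, Pi.smul_apply, smul_eq_mul, Matrix.cramer_apply]
    have hupd : (BK.map C).updateCol last (fun i => C ((h i).coeff t))
        = (BK.updateCol last (fun i => (h i).coeff t)).map C := by
      rw [Matrix.map_updateCol]
      rfl
    rw [hupd, ← RingHom.mapMatrix_apply, ← RingHom.map_det]
    ring
  have hPcoeff : ∀ E, (Sres m n d f g).coeff E = if E < T then Dt E else 0 := by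
    intro E
    rw [hP, finset_sum_coeff]
    have : ∀ t ∈ Finset.range T, (C (Dt t) * X ^ t).coeff E
        = if E = t then Dt t else 0 := by
      intro t _
      rw [coeff_C_mul, coeff_X_pow]
      split_ifs <;> [rw [mul_one]; rw [mul_zero]]
    rw [Finset.sum_congr rfl this, Finset.sum_ite_eq (Finset.range T) E (fun t => Dt t)]
    simp [Finset.mem_range]
  -- vanishing of high coefficients
  have hvanish : ∀ E, d < E → (Sres m n d f g).coeff E = 0 := by
    intro E hE
    rw [hPcoeff]
    split_ifs with hET
    · rw [hDt]
      set j₀ : Fin N := ⟨m + n - d - 1 - E, by omega⟩ with hj₀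
      apply Matrix.det_zero_of_column_eq (i := j₀) (j := last)
      · intro hc
        rw [hj₀, hlast, Fin.mk.injEq] at hc
        omega
      · intro k
        have hne : j₀ ≠ last := by
          rw [hj₀, hlast]
          intro hc
          rw [Fin.mk.injEq] at hc
          omega
        rw [Matrix.updateCol_ne hne, Matrix.updateCol_self, hBK, Matrix.of_apply]
        have hj0v : (j₀ : ℕ) = m + n - d - 1 - E := rfl
        rw [hj0v]
        congr 1
        omega
    · rfl
  -- cofactor coefficients
  set q : Fin N → K := fun i =>
    ((LinearMap.proj last).comp (Matrix.cramer BK)) (Pi.single i 1) with hq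
  have hsingle : ∀ i : Fin N, (fun j => if i = j then (1 : K) else 0) = Pi.single i 1 := by
    intro i
    funext j
    rw [Pi.single_apply]
    by_cases hij : i = j
    · rw [if_pos hij, if_pos hij.symm]
    · rw [if_neg hij, if_neg (Ne.symm hij)]
  have hDtq : ∀ t, Dt t = ∑ i, (h i).coeff t * q i := by
    intro t
    have := LinearMap.pi_apply_eq_sum_univ
      ((LinearMap.proj (R := K) (φ := fun _ : Fin N => K) last).comp (Matrix.cramer BK))
      (fun i => (h i).coeff t)
    rw [hDt]
    dsimp only [LinearMap.comp_apply, LinearMap.proj_apply] at this ⊢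
    rw [← Matrix.cramer_apply, this]
    refine Finset.sum_congr rfl (fun i _ => ?_)
    rw [smul_eq_mul, hq]
    dsimp only [LinearMap.comp_apply, LinearMap.proj_apply]
    rw [hsingle i]
  have hPrep : Sres m n d f g = ∑ i, C (q i) * h i := by
    rw [hP]
    have : ∀ t ∈ Finset.range T, C (Dt t) * X ^ t
        = ∑ i, C (q i) * (C ((h i).coeff t) * X ^ t) := by
      intro t _
      rw [hDtq t, map_sum, Finset.sum_mul]
      refine Finset.sum_congr rfl (fun i _ => ?_)
      rw [C_mul]
      ring
    rw [Finset.sum_congr rfl this, Finset.sum_comm]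
    refine Finset.sum_congr rfl (fun i _ => ?_)
    rw [← Finset.mul_sum]
    congr 1
    conv_rhs => rw [(h i).as_sum_range' T (hdeg i)]
    exact Finset.sum_congr rfl (fun t _ => C_mul_X_pow_eq_monomial)
  -- build u and v
  set u : K[X] := ∑ i : Fin N,
    if (i : ℕ) < n - d then C (q i) * X ^ (n - d - 1 - (i : ℕ)) else 0 with hu
  set v : K[X] := ∑ i : Fin N,
    if (i : ℕ) < n - d then 0 else C (q i) * X ^ (m - d - 1 - ((i : ℕ) - (n - d))) with hv
  refine ⟨u, v, ?_, ?_, ?_, hvanish⟩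
  · intro E hE
    rw [hu, finset_sum_coeff]
    refine Finset.sum_eq_zero (fun i _ => ?_)
    split_ifs with hi
    · rw [coeff_C_mul, coeff_X_pow, if_neg (by omega), mul_zero]
    · rw [coeff_zero]
  · intro E hE
    rw [hv, finset_sum_coeff]
    refine Finset.sum_eq_zero (fun i _ => ?_)
    split_ifs with hi
    · rw [coeff_zero]
    · have : (i : ℕ) - (n - d) < m - d := by
        have := i.isLt
        omega
      rw [coeff_C_mul, coeff_X_pow, if_neg (by omega), mul_zero]
  · rw [hPrep, hu, hv, Finset.sum_mul, Finset.sum_mul, ← Finset.sum_add_distrib]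
    refine Finset.sum_congr rfl (fun i _ => ?_)
    rw [hh]
    dsimp only
    split_ifs with hi
    · rw [zero_mul, add_zero]
      ring
    · rw [zero_mul, zero_add]
      ring


end SubresAux

theorem subresultant_coeff_recurrence {K : Type*} [Field K] [CharZero K]
    (α β : K) (hαβ : α ≠ β) (m n d : ℕ) (hm : d < m) (hn : d < n)
    (s : ℕ → K) (hs : ∀ k, s k = (Sres m n d ((X - C α) ^ m) ((X - C β) ^ n)).coeff k) :
    ∀ k, k < d →
      (((d - k : ℕ) : K) * ((m : K) + (n : K) - (d : K) - (k : K) - 1)) * s k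
        = -((k : K) + 1) *
            ((((n : K) - (k : K) - 1) * α + ((m : K) - (k : K) - 1) * β) * s (k + 1)
              + ((k : K) + 2) * α * β * s (k + 2)) := by
  classical
  intro k hk
  obtain ⟨u, v, hU, hV, hrep, hvan⟩ := SubresAux.exists_rep α β m n d hm hn
  set P : K[X] := Sres m n d ((X - C α) ^ m) ((X - C β) ^ n) with hP
  set c₁ : K := (d : K) * ((m : K) + (n : K) - (d : K) - 1) with hc₁
  -- the two intertwining identities
  have h2 := SubresAux.Lop_key m n α β c₁ u
  have h3 := SubresAux.Lop_key n m β α c₁ v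
  rw [SubresAux.Lop_comm β α, SubresAux.Lop_comm β α] at h3
  rw [show (2 - (n : K) - (m : K)) = 2 - (m : K) - (n : K) by ring,
      show ((m : K) - 1) * β + ((n : K) - 1) * α = ((n : K) - 1) * α + ((m : K) - 1) * β
        by ring] at h3
  set U : K[X] := SubresAux.Lop α β ((m : K) - (n : K) + 2)
      (((n : K) - 1) * α - ((m : K) + 1) * β) (c₁ - (m : K) * ((n : K) - 1)) u with hUdef
  set V : K[X] := SubresAux.Lop α β ((n : K) - (m : K) + 2)
      (((m : K) - 1) * β - ((n : K) + 1) * α) (c₁ - (n : K) * ((m : K) - 1)) v with hVdef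
  set A₁ : K := 2 - (m : K) - (n : K) with hA₁
  set B₁ : K := ((n : K) - 1) * α + ((m : K) - 1) * β with hB₁
  have hsplit : SubresAux.Lop α β A₁ B₁ c₁ P
      = U * (X - C α) ^ m + V * (X - C β) ^ n := by
    rw [hrep, SubresAux.Lop_add, h2, h3]
  -- vanishing of high coefficients of Lop applied to P
  have hDPc : ∀ E, d ≤ E → (SubresAux.Lop α β A₁ B₁ c₁ P).coeff E = 0 := by
    intro E hE
    rw [SubresAux.coeff_Lop]
    rcases Nat.eq_or_lt_of_le hE with hEd | hEd
    · subst hEd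
      rw [hvan (d + 1) (by omega), hvan (d + 2) (by omega), mul_zero, mul_zero, add_zero,
        add_zero]
      have hz : ((d : K) * ((d : K) - 1) + A₁ * (d : K) + c₁) = 0 := by
        rw [hA₁, hc₁]
        ring
      rw [hz, zero_mul]
    · rw [hvan E hEd, hvan (E + 1) (by omega), hvan (E + 2) (by omega), mul_zero, mul_zero,
        mul_zero, add_zero, add_zero]
  -- coefficient bounds for U and V
  have hUc : ∀ E, n - d ≤ E → U.coeff E = 0 := by
    intro E hE
    rw [hUdef, SubresAux.coeff_Lop, hU E hE, hU (E + 1) (by omega), hU (E + 2) (by omega)]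
    ring
  have hVc : ∀ E, m - d ≤ E → V.coeff E = 0 := by
    intro E hE
    rw [hVdef, SubresAux.coeff_Lop, hV E hE, hV (E + 1) (by omega), hV (E + 2) (by omega)]
    ring
  obtain ⟨hU0, hV0⟩ := SubresAux.uniq α β hαβ d m n U V hm hn hUc hVc
    (fun E hE => by rw [← hsplit]; exact hDPc E hE)
  have hDP0 : SubresAux.Lop α β A₁ B₁ c₁ P = 0 := by
    rw [hsplit, hU0, hV0, zero_mul, zero_mul, add_zero]
  have hck : (SubresAux.Lop α β A₁ B₁ c₁ P).coeff k = 0 := by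
    rw [hDP0, coeff_zero]
  rw [SubresAux.coeff_Lop] at hck
  rw [hs k, hs (k + 1), hs (k + 2), Nat.cast_sub hk.le]
  rw [hA₁, hB₁, hc₁] at hck
  linear_combination hck
end

section
/- For a field K, f, g ∈ K[x], d ≥ 0, α ∈ K, and γ ∈ K nonzero with deg f = m, deg g = n, d < min(m,n): Sres_d(f(x-α), g(x-α)) = (Sres_d(f,g))(x-α), and Sres_d(f(γx), g(γx)) = γ^(mn - d(d+1)) · (Sres_d(f,g))(γx). -/
open Polynomial

section Auxiliary

open Finset

variable {K : Type*} [Field K]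

/-- Generic determinant of a matrix whose rows are (coefficients of) polynomials:
column `j < S-1` holds the coefficient of `x^(N-1-j)`, the last column holds the
polynomial itself. -/
noncomputable def genDet (S N : ℕ) (p : Fin S → Polynomial K) : Polynomial K :=
  (Matrix.of fun i j : Fin S =>
    if (j : ℕ) = S - 1 then p i else C ((p i).coeff (N - 1 - (j : ℕ)))).det

lemma comp_genDet (S N : ℕ) (q : Polynomial K) (p : Fin S → Polynomial K) :
    (genDet S N p).comp q =
      (Matrix.of fun i j : Fin S =>
        if (j : ℕ) = S - 1 then (p i).comp q else C ((p i).coeff (N - 1 - (j : ℕ)))).det := by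
  have h : (genDet S N p).comp q = (eval₂RingHom C q) (genDet S N p) := rfl
  rw [h, genDet, RingHom.map_det]
  congr 1
  apply Matrix.ext
  intro i j
  simp only [RingHom.mapMatrix_apply, Matrix.map_apply, Matrix.of_apply]
  split_ifs
  · rfl
  · simp [coe_eval₂RingHom]

lemma coeff_comp_X_add_C' (p : Polynomial K) (c : K) {N : ℕ} (hN : p.natDegree < N) (s : ℕ) :
    (p.comp (X + C c)).coeff s
      = ∑ t ∈ range N, p.coeff t * (c ^ (t - s) * (t.choose s : K)) := by
  rw [comp, eval₂_eq_sum_range' (C : K →+* Polynomial K) hN (X + C c), finset_sum_coeff]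
  exact Finset.sum_congr rfl fun t _ => by rw [coeff_C_mul, coeff_X_add_C_pow]

lemma coeff_comp_C_mul_X' (p : Polynomial K) (γ : K) (s : ℕ) :
    (p.comp (C γ * X)).coeff s = γ ^ s * p.coeff s := by
  have hN : p.natDegree < max (p.natDegree + 1) (s + 1) := by omega
  rw [comp, eval₂_eq_sum_range' (C : K →+* Polynomial K) hN (C γ * X), finset_sum_coeff]
  have key : ∀ t, (C (p.coeff t) * (C γ * X) ^ t).coeff s
      = if t = s then γ ^ s * p.coeff t else 0 := by
    intro t
    rw [mul_pow, ← C_pow, ← mul_assoc, ← C_mul, coeff_C_mul, coeff_X_pow]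
    split_ifs with h1 h2 h2
    · rw [h2]; ring
    · exact absurd h1.symm h2
    · exact absurd h2.symm h1
    · ring
  rw [Finset.sum_congr rfl fun t _ => key t, Finset.sum_ite_eq' (range _) s]
  simp only [Finset.mem_range]
  rw [if_pos (by omega)]

lemma genDet_rowcomb (S N : ℕ) (R : Matrix (Fin S) (Fin S) K) (p : Fin S → Polynomial K) :
    genDet S N (fun i => ∑ i', C (R i i') * p i') = C R.det * genDet S N p := by
  rw [genDet, genDet, RingHom.map_det, ← Matrix.det_mul]
  congr 1
  apply Matrix.ext
  intro i j
  rw [Matrix.mul_apply]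
  simp only [RingHom.mapMatrix_apply, Matrix.map_apply, Matrix.of_apply]
  split_ifs with h
  · rfl
  · rw [finset_sum_coeff, map_sum]
    exact Finset.sum_congr rfl fun i' _ => by rw [coeff_C_mul, C_mul]

lemma genDet_smul_rows (S N : ℕ) (v : Fin S → K) (p : Fin S → Polynomial K) :
    genDet S N (fun i => C (v i) * p i) = C (∏ i, v i) * genDet S N p := by
  have h := genDet_rowcomb S N (Matrix.diagonal v) p
  rw [Matrix.det_diagonal] at h
  rw [← h]
  congr 1
  funext i
  rw [Finset.sum_congr rfl (fun i' _ => by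
    rw [Matrix.diagonal_apply, apply_ite C, C_0, ite_mul, zero_mul])]
  rw [Finset.sum_ite_eq, if_pos (Finset.mem_univ i)]

lemma genDet_comp_X_add_C (S N : ℕ) (hS : 1 ≤ S) (hSN : S ≤ N) (c : K)
    (p : Fin S → Polynomial K) (hp : ∀ i, (p i).natDegree < N) :
    genDet S N (fun i => (p i).comp (X + C c)) = (genDet S N p).comp (X + C c) := by
  rw [comp_genDet]
  set M1 : Matrix (Fin S) (Fin S) (Polynomial K) := Matrix.of fun i j =>
    if (j : ℕ) = S - 1 then (p i).comp (X + C c) else C ((p i).coeff (N - 1 - (j : ℕ)))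
    with hM1
  set T : Matrix (Fin S) (Fin S) (Polynomial K) := Matrix.of fun j' j =>
    if (j : ℕ) = S - 1 then (if (j' : ℕ) = S - 1 then 1 else 0)
    else if (j' : ℕ) = S - 1 then 0
    else C (c ^ ((N - 1 - (j' : ℕ)) - (N - 1 - (j : ℕ))) *
        (((N - 1 - (j' : ℕ)).choose (N - 1 - (j : ℕ))) : K)) with hT
  have hdetT : T.det = 1 := by
    rw [Matrix.det_of_upperTriangular (M := T) ?ut]
    case ut =>
      intro j' j hlt
      have hlt' : (j : ℕ) < (j' : ℕ) := hlt
      have hj'2 := j'.isLt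
      have hjne : (j : ℕ) ≠ S - 1 := by omega
      simp only [hT, Matrix.of_apply]
      rw [if_neg hjne]
      by_cases h : (j' : ℕ) = S - 1
      · rw [if_pos h]
      · rw [if_neg h, Nat.choose_eq_zero_of_lt (by omega)]
        simp
    · apply Finset.prod_eq_one
      intro j _
      simp only [hT, Matrix.of_apply]
      by_cases h : (j : ℕ) = S - 1
      · rw [if_pos h, if_pos h]
      · rw [if_neg h, if_neg h, Nat.sub_self, pow_zero, Nat.choose_self]
        simp
  have hmul : (Matrix.of fun i j : Fin S =>
      if (j : ℕ) = S - 1 then (p i).comp (X + C c)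
      else C (((p i).comp (X + C c)).coeff (N - 1 - (j : ℕ)))) = M1 * T := by
    apply Matrix.ext
    intro i j
    rw [Matrix.mul_apply]
    simp only [Matrix.of_apply]
    by_cases hj : (j : ℕ) = S - 1
    · rw [if_pos hj]
      rw [Finset.sum_eq_single (⟨S - 1, by omega⟩ : Fin S)]
      · simp only [hM1, hT, Matrix.of_apply, if_pos hj]
        norm_num
      · intro j' _ hne
        have : (j' : ℕ) ≠ S - 1 := fun h => hne (Fin.ext h)
        simp only [hT, Matrix.of_apply, if_pos hj, if_neg this, mul_zero]
      · intro h; exact absurd (Finset.mem_univ _) h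
    · rw [if_neg hj]
      have hjS : (j : ℕ) < S - 1 := by have := j.isLt; omega
      set s := N - 1 - (j : ℕ) with hs
      rw [coeff_comp_X_add_C' (p i) c (hp i) s, map_sum]
      have key : ∀ j' : Fin S, M1 i j' * T j' j =
          (fun u : ℕ => if u = S - 1 then 0 else
            C ((p i).coeff (N - 1 - u) * (c ^ ((N - 1 - u) - s) *
              (((N - 1 - u).choose s) : K)))) (j' : ℕ) := by
        intro j'
        simp only [hM1, hT, Matrix.of_apply, if_neg hj]
        by_cases h : (j' : ℕ) = S - 1
        · simp only [if_pos h, mul_zero]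
        · simp only [if_neg h]
          rw [← C_mul, mul_comm (c ^ _)]
      rw [Finset.sum_congr rfl fun j' _ => key j']
      rw [Fin.sum_univ_eq_sum_range (fun u : ℕ => if u = S - 1 then 0 else
            C ((p i).coeff (N - 1 - u) * (c ^ ((N - 1 - u) - s) *
              (((N - 1 - u).choose s) : K)))) S]
      have hsplit : ∑ u ∈ range S, (if u = S - 1 then 0 else
            C ((p i).coeff (N - 1 - u) * (c ^ ((N - 1 - u) - s) *
              (((N - 1 - u).choose s) : K))))
          = ∑ u ∈ range (S - 1), C ((p i).coeff (N - 1 - u) * (c ^ ((N - 1 - u) - s) *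
              (((N - 1 - u).choose s) : K))) := by
        rw [show S = (S - 1) + 1 by omega]
        rw [Finset.sum_range_succ]
        simp only [Nat.add_sub_cancel, if_true, ite_true, add_zero]
        exact Finset.sum_congr rfl fun u hu => by
          rw [if_neg (by exact Nat.ne_of_lt (Finset.mem_range.mp hu))]
      rw [hsplit]
      have h0 : ∀ t ∈ range (N - S + 1),
          C ((p i).coeff t * (c ^ (t - s) * (t.choose s : K))) = 0 := by
        intro t ht
        rw [Nat.choose_eq_zero_of_lt (by simp only [Finset.mem_range] at ht; omega)]
        simp
      have hNsplit : N = (N - S + 1) + (S - 1) := by omega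
      calc ∑ t ∈ range N, C ((p i).coeff t * (c ^ (t - s) * (t.choose s : K)))
          = ∑ t ∈ range ((N - S + 1) + (S - 1)),
              C ((p i).coeff t * (c ^ (t - s) * (t.choose s : K))) := by rw [← hNsplit]
        _ = ∑ t ∈ range (N - S + 1), C ((p i).coeff t * (c ^ (t - s) * (t.choose s : K)))
            + ∑ u ∈ range (S - 1),
              C ((p i).coeff (N - S + 1 + u) * (c ^ ((N - S + 1 + u) - s) *
                (((N - S + 1 + u).choose s) : K))) := Finset.sum_range_add _ _ _
        _ = ∑ u ∈ range (S - 1),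
              C ((p i).coeff (N - S + 1 + u) * (c ^ ((N - S + 1 + u) - s) *
                (((N - S + 1 + u).choose s) : K))) := by
              rw [Finset.sum_eq_zero h0, zero_add]
        _ = ∑ u ∈ range (S - 1),
              C ((p i).coeff (N - S + 1 + (S - 1 - 1 - u)) *
                (c ^ ((N - S + 1 + (S - 1 - 1 - u)) - s) *
                (((N - S + 1 + (S - 1 - 1 - u)).choose s) : K))) :=
              (Finset.sum_range_reflect _ _).symm
        _ = ∑ u ∈ range (S - 1), C ((p i).coeff (N - 1 - u) * (c ^ ((N - 1 - u) - s) *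
              (((N - 1 - u).choose s) : K))) := by
              refine Finset.sum_congr rfl fun u hu => ?_
              have hu' : u < S - 1 := Finset.mem_range.mp hu
              rw [show N - S + 1 + (S - 1 - 1 - u) = N - 1 - u by omega]
  rw [genDet]
  show (Matrix.of fun i j : Fin S =>
      if (j : ℕ) = S - 1 then (p i).comp (X + C c)
      else C (((fun i => (p i).comp (X + C c)) i).coeff (N - 1 - (j : ℕ)))).det = M1.det
  rw [hmul, Matrix.det_mul, hdetT, mul_one]

lemma genDet_comp_C_mul_X (S N : ℕ) (hS : 1 ≤ S) (γ : K) (p : Fin S → Polynomial K) :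
    genDet S N (fun i => (p i).comp (C γ * X))
      = C (γ ^ (∑ j ∈ range (S - 1), (N - 1 - j))) * (genDet S N p).comp (C γ * X) := by
  rw [comp_genDet]
  set M1 : Matrix (Fin S) (Fin S) (Polynomial K) := Matrix.of fun i j =>
    if (j : ℕ) = S - 1 then (p i).comp (C γ * X) else C ((p i).coeff (N - 1 - (j : ℕ)))
    with hM1
  set v : Fin S → Polynomial K := fun j =>
    if (j : ℕ) = S - 1 then 1 else C (γ ^ (N - 1 - (j : ℕ))) with hv
  have hmul : (Matrix.of fun i j : Fin S =>
      if (j : ℕ) = S - 1 then (p i).comp (C γ * X)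
      else C (((p i).comp (C γ * X)).coeff (N - 1 - (j : ℕ)))) = M1 * Matrix.diagonal v := by
    apply Matrix.ext
    intro i j
    rw [Matrix.mul_diagonal]
    simp only [hM1, hv, Matrix.of_apply]
    by_cases hj : (j : ℕ) = S - 1
    · simp only [if_pos hj, mul_one]
    · simp only [if_neg hj]
      rw [coeff_comp_C_mul_X', ← C_mul, mul_comm]
  have hdet : (Matrix.diagonal v).det = C (γ ^ (∑ j ∈ range (S - 1), (N - 1 - j))) := by
    rw [Matrix.det_diagonal]
    rw [Fin.prod_univ_eq_prod_range (fun u : ℕ =>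
      if u = S - 1 then 1 else C (γ ^ (N - 1 - u))) S]
    rw [show S = (S - 1) + 1 by omega, Finset.prod_range_succ]
    simp only [Nat.add_sub_cancel, ite_true, if_true, mul_one]
    rw [Finset.prod_congr rfl (fun u hu => by
      rw [if_neg (Nat.ne_of_lt (Finset.mem_range.mp hu))])]
    rw [← map_prod, Finset.prod_pow_eq_pow_sum]
  rw [genDet]
  show (Matrix.of fun i j : Fin S =>
      if (j : ℕ) = S - 1 then (p i).comp (C γ * X)
      else C (((fun i => (p i).comp (C γ * X)) i).coeff (N - 1 - (j : ℕ)))).det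
    = C (γ ^ (∑ j ∈ range (S - 1), (N - 1 - j))) * M1.det
  rw [hmul, Matrix.det_mul, hdet, mul_comm]

lemma Sres_eq_genDet (m n d : ℕ) (hm : d < m) (hn : d < n) (f g : Polynomial K) :
    Sres m n d f g = genDet (m + n - 2 * d) (m + n - d)
      (fun i => if (i : ℕ) < n - d then X ^ (n - d - 1 - (i : ℕ)) * f
        else X ^ (m - d - 1 - ((i : ℕ) - (n - d))) * g) := by
  rw [Sres, genDet]
  congr 1
  apply Matrix.ext
  intro i j
  have hi := i.isLt
  have hj := j.isLt
  simp only [Matrix.of_apply]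
  by_cases hib : (i : ℕ) < n - d
  · simp only [if_pos hib]
    by_cases hjl : (j : ℕ) = m + n - 2 * d - 1
    · simp only [if_pos hjl]
    · simp only [if_neg hjl]
      have hj2 : (j : ℕ) < m + n - 2 * d - 1 := by omega
      rw [mul_comm (X ^ (n - d - 1 - (i : ℕ))) f, coeff_mul_X_pow']
      by_cases hc : (j : ℕ) ≤ m + (i : ℕ)
      · rw [if_pos hc, if_pos (by omega),
          show m + n - d - 1 - (j : ℕ) - (n - d - 1 - (i : ℕ)) = m + (i : ℕ) - (j : ℕ) by omega]
      · rw [if_neg hc, if_neg (by omega), C_0]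
  · simp only [if_neg hib]
    by_cases hjl : (j : ℕ) = m + n - 2 * d - 1
    · simp only [if_pos hjl]
    · simp only [if_neg hjl]
      have hj2 : (j : ℕ) < m + n - 2 * d - 1 := by omega
      rw [mul_comm (X ^ (m - d - 1 - ((i : ℕ) - (n - d)))) g, coeff_mul_X_pow']
      by_cases hc : (j : ℕ) ≤ n + ((i : ℕ) - (n - d))
      · rw [if_pos hc, if_pos (by omega),
          show m + n - d - 1 - (j : ℕ) - (m - d - 1 - ((i : ℕ) - (n - d)))
            = n + ((i : ℕ) - (n - d)) - (j : ℕ) by omega]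
      · rw [if_neg hc, if_neg (by omega), C_0]

lemma sres_arith (m n d : ℕ) (hm : d < m) (hn : d < n) :
    (∑ i ∈ range (m + n - 2 * d),
        (if i < n - d then n - d - 1 - i else m - d - 1 - (i - (n - d))))
      + (m * n - d * (d + 1))
    = ∑ j ∈ range (m + n - 2 * d - 1), (m + n - d - 1 - j) := by
  obtain ⟨a, rfl⟩ : ∃ a, m = d + (a + 1) := ⟨m - d - 1, by omega⟩
  obtain ⟨b, rfl⟩ : ∃ b, n = d + (b + 1) := ⟨n - d - 1, by omega⟩
  have e1 : d + (a + 1) + (d + (b + 1)) - 2 * d = (b + 1) + (a + 1) := by omega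
  rw [e1, show b + 1 + (a + 1) - 1 = a + b + 1 by omega]
  have hL : ∑ i ∈ range ((b + 1) + (a + 1)),
      (if i < d + (b + 1) - d then d + (b + 1) - d - 1 - i
        else d + (a + 1) - d - 1 - (i - (d + (b + 1) - d)))
      = (∑ i ∈ range (b + 1), i) + (∑ i ∈ range (a + 1), i) := by
    rw [Finset.sum_range_add]
    congr 1
    · rw [← Finset.sum_range_reflect (fun i => i) (b + 1)]
      refine Finset.sum_congr rfl fun i hi => ?_
      have hi' : i < b + 1 := Finset.mem_range.mp hi
      rw [if_pos (by omega)]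
      omega
    · rw [← Finset.sum_range_reflect (fun i => i) (a + 1)]
      refine Finset.sum_congr rfl fun i hi => ?_
      have hi' : i < a + 1 := Finset.mem_range.mp hi
      rw [if_neg (by omega)]
      omega
  rw [hL]
  have hR : ∑ j ∈ range (a + b + 1), (d + (a + 1) + (d + (b + 1)) - d - 1 - j)
      = (∑ j ∈ range (a + b + 1), j) + (a + b + 1) * (d + 1) := by
    rw [Finset.sum_congr rfl (g := fun j => (a + b + 1 - 1 - j) + (d + 1)) (fun j hj => by
      have hj' : j < a + b + 1 := Finset.mem_range.mp hj
      show _ = a + b + 1 - 1 - j + (d + 1)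
      omega)]
    rw [Finset.sum_range_reflect (fun j => j + (d + 1)) (a + b + 1)]
    rw [Finset.sum_add_distrib, Finset.sum_const, Finset.card_range, smul_eq_mul]
  rw [hR]
  have g1 := Finset.sum_range_id_mul_two (b + 1)
  have g2 := Finset.sum_range_id_mul_two (a + 1)
  have g3 := Finset.sum_range_id_mul_two (a + b + 1)
  simp only [Nat.add_sub_cancel] at g1 g2 g3
  have key : (b + 1) * b + (a + 1) * a + 2 * ((d + (a + 1)) * (d + (b + 1)))
      = (a + b + 1) * (a + b) + 2 * ((a + b + 1) * (d + 1)) + 2 * (d * (d + 1)) := by ring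
  have hle : d * (d + 1) ≤ (d + (a + 1)) * (d + (b + 1)) :=
    Nat.mul_le_mul (by omega) (by omega)
  omega

noncomputable def Rmat (m n d : ℕ) (c : K) :
    Matrix (Fin (m + n - 2 * d)) (Fin (m + n - 2 * d)) K :=
  Matrix.of fun i i' =>
    if (i : ℕ) < n - d then
      (if (i' : ℕ) < n - d ∧ (i : ℕ) ≤ (i' : ℕ)
        then ((n - d - 1 - (i : ℕ)).choose (n - d - 1 - (i' : ℕ)) : K)
          * (-c) ^ ((i' : ℕ) - (i : ℕ)) else 0)
    else
      (if ¬ (i' : ℕ) < n - d ∧ (i : ℕ) ≤ (i' : ℕ)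
        then ((m - d - 1 - ((i : ℕ) - (n - d))).choose (m - d - 1 - ((i' : ℕ) - (n - d))) : K)
          * (-c) ^ ((i' : ℕ) - (i : ℕ)) else 0)

lemma Rmat_det (m n d : ℕ) (c : K) : (Rmat m n d c).det = 1 := by
  rw [Matrix.det_of_upperTriangular (M := Rmat m n d c) ?ut]
  case ut =>
    intro i i' hlt
    have hlt' : (i' : ℕ) < (i : ℕ) := hlt
    simp only [Rmat, Matrix.of_apply]
    split_ifs with h1 h2 h3 <;> first
      | rfl
      | (exfalso; omega)
  · apply Finset.prod_eq_one
    intro i _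
    simp only [Rmat, Matrix.of_apply]
    by_cases h : (i : ℕ) < n - d
    · rw [if_pos h, if_pos ⟨h, le_refl _⟩, Nat.sub_self, pow_zero, Nat.choose_self]
      simp
    · rw [if_neg h, if_pos ⟨h, le_refl _⟩, Nat.sub_self, pow_zero, Nat.choose_self]
      simp

lemma binom_row (f : Polynomial K) (c : K) (k : ℕ) :
    (X : Polynomial K) ^ k * (f.comp (X + C c))
      = ∑ s ∈ range (k + 1),
          C ((k.choose s : K) * (-c) ^ (k - s)) * ((X ^ s * f).comp (X + C c)) := by
  have hXe : (X : Polynomial K) = (X + C c) + C (-c) := by rw [map_neg]; ring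
  calc (X : Polynomial K) ^ k * (f.comp (X + C c))
      = ((X + C c) + C (-c)) ^ k * (f.comp (X + C c)) := by rw [← hXe]
    _ = (∑ s ∈ range (k + 1), (X + C c) ^ s * C (-c) ^ (k - s) * ((k.choose s : ℕ) : Polynomial K))
          * (f.comp (X + C c)) := by rw [add_pow]
    _ = _ := by
        rw [Finset.sum_mul]
        refine Finset.sum_congr rfl fun s _ => ?_
        simp only [mul_comp, X_pow_comp, C_mul, C_pow, C_eq_natCast]
        ring

lemma rowPoly_comp (m n d : ℕ) (hm : d < m) (hn : d < n) (f g : Polynomial K) (c : K)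
    (i : Fin (m + n - 2 * d)) :
    (if (i : ℕ) < n - d then X ^ (n - d - 1 - (i : ℕ)) * (f.comp (X + C c))
      else X ^ (m - d - 1 - ((i : ℕ) - (n - d))) * (g.comp (X + C c)))
    = ∑ i' : Fin (m + n - 2 * d), C (Rmat m n d c i i') *
        ((if (i' : ℕ) < n - d then X ^ (n - d - 1 - (i' : ℕ)) * f
          else X ^ (m - d - 1 - ((i' : ℕ) - (n - d))) * g).comp (X + C c)) := by
  have hi := i.isLt
  by_cases hib : (i : ℕ) < n - d
  · set k := n - d - 1 - (i : ℕ) with hk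
    set G : ℕ → Polynomial K := fun u =>
      if u < n - d ∧ (i : ℕ) ≤ u then
        C ((k.choose (n - d - 1 - u) : K) * (-c) ^ (u - (i : ℕ)))
          * ((X ^ (n - d - 1 - u) * f).comp (X + C c))
      else 0 with hG
    have hterm : ∀ i' : Fin (m + n - 2 * d),
        C (Rmat m n d c i i') *
          ((if (i' : ℕ) < n - d then X ^ (n - d - 1 - (i' : ℕ)) * f
            else X ^ (m - d - 1 - ((i' : ℕ) - (n - d))) * g).comp (X + C c)) = G (i' : ℕ) := by
      intro i'
      simp only [hG, Rmat, Matrix.of_apply, if_pos hib]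
      by_cases h1 : (i' : ℕ) < n - d ∧ (i : ℕ) ≤ (i' : ℕ)
      · rw [if_pos h1, if_pos h1, if_pos h1.1]
      · rw [if_neg h1, if_neg h1, C_0, zero_mul]
    rw [Finset.sum_congr rfl fun i' _ => hterm i', Fin.sum_univ_eq_sum_range G _]
    have hsub : Finset.Ico (i : ℕ) (n - d) ⊆ range (m + n - 2 * d) := by
      intro u hu
      simp only [Finset.mem_Ico] at hu
      simp only [Finset.mem_range]
      omega
    rw [← Finset.sum_subset hsub (fun u _ hu => by
      simp only [Finset.mem_Ico, not_and, not_lt] at hu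
      simp only [hG]
      by_cases h2 : (i : ℕ) ≤ u
      · rw [if_neg (by push_neg; intro h3; exact absurd (hu h2) (by omega))]
      · rw [if_neg (by push_neg; intro _; omega)])]
    rw [Finset.sum_Ico_eq_sum_range, show n - d - (i : ℕ) = k + 1 by omega]
    rw [← Finset.sum_range_reflect (fun u => G ((i : ℕ) + u)) (k + 1)]
    rw [if_pos hib, binom_row f c k]
    refine Finset.sum_congr rfl fun s hs => ?_
    have hs' : s < k + 1 := Finset.mem_range.mp hs
    show _ = G ((i : ℕ) + (k + 1 - 1 - s))
    simp only [hG]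
    rw [if_pos (by constructor <;> omega)]
    rw [show n - d - 1 - ((i : ℕ) + (k + 1 - 1 - s)) = s by omega,
      show (i : ℕ) + (k + 1 - 1 - s) - (i : ℕ) = k - s by omega]
  · set e := (i : ℕ) - (n - d) with he
    set k := m - d - 1 - e with hk
    set G : ℕ → Polynomial K := fun u =>
      if ¬ u < n - d ∧ (i : ℕ) ≤ u then
        C ((k.choose (m - d - 1 - (u - (n - d))) : K) * (-c) ^ (u - (i : ℕ)))
          * ((X ^ (m - d - 1 - (u - (n - d))) * g).comp (X + C c))
      else 0 with hG
    have hterm : ∀ i' : Fin (m + n - 2 * d),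
        C (Rmat m n d c i i') *
          ((if (i' : ℕ) < n - d then X ^ (n - d - 1 - (i' : ℕ)) * f
            else X ^ (m - d - 1 - ((i' : ℕ) - (n - d))) * g).comp (X + C c)) = G (i' : ℕ) := by
      intro i'
      simp only [hG, Rmat, Matrix.of_apply, if_neg hib]
      by_cases h1 : ¬ (i' : ℕ) < n - d ∧ (i : ℕ) ≤ (i' : ℕ)
      · rw [if_pos h1, if_pos h1, if_neg h1.1]
      · rw [if_neg h1, if_neg h1, C_0, zero_mul]
    rw [Finset.sum_congr rfl fun i' _ => hterm i', Fin.sum_univ_eq_sum_range G _]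
    have hsub : Finset.Ico (i : ℕ) (m + n - 2 * d) ⊆ range (m + n - 2 * d) := by
      intro u hu
      simp only [Finset.mem_Ico] at hu
      simp only [Finset.mem_range]
      omega
    rw [← Finset.sum_subset hsub (fun u hu' hu => by
      simp only [Finset.mem_range] at hu'
      simp only [Finset.mem_Ico, not_and, not_lt] at hu
      simp only [hG]
      rw [if_neg (fun hcon => absurd (hu hcon.2) (by omega))])]
    rw [Finset.sum_Ico_eq_sum_range, show m + n - 2 * d - (i : ℕ) = k + 1 by omega]
    rw [← Finset.sum_range_reflect (fun u => G ((i : ℕ) + u)) (k + 1)]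
    rw [if_neg hib, binom_row g c k]
    refine Finset.sum_congr rfl fun s hs => ?_
    have hs' : s < k + 1 := Finset.mem_range.mp hs
    show _ = G ((i : ℕ) + (k + 1 - 1 - s))
    simp only [hG]
    rw [if_pos (by constructor <;> omega)]
    rw [show m - d - 1 - ((i : ℕ) + (k + 1 - 1 - s) - (n - d)) = s by omega,
      show (i : ℕ) + (k + 1 - 1 - s) - (i : ℕ) = k - s by omega]

end Auxiliary

set_option maxHeartbeats 1000000 in
theorem subresultant_change_of_variables {K : Type*} [Field K]
    (f g : Polynomial K) (m n d : ℕ) (hf : f.natDegree = m) (hg : g.natDegree = n)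
    (hd : d < min m n) (α γ : K) (hγ : γ ≠ 0) :
    Sres m n d (f.comp (X - C α)) (g.comp (X - C α))
        = (Sres m n d f g).comp (X - C α) ∧
    Sres m n d (f.comp (C γ * X)) (g.comp (C γ * X))
        = C (γ ^ (m * n - d * (d + 1))) * (Sres m n d f g).comp (C γ * X) := by
  have hm : d < m := lt_of_lt_of_le hd (min_le_left _ _)
  have hn : d < n := lt_of_lt_of_le hd (min_le_right _ _)
  have hS1 : 1 ≤ m + n - 2 * d := by omega
  have hSN : m + n - 2 * d ≤ m + n - d := by omega
  have hdeg : ∀ i : Fin (m + n - 2 * d),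
      ((fun i : Fin (m + n - 2 * d) =>
        if (i : ℕ) < n - d then X ^ (n - d - 1 - (i : ℕ)) * f
        else X ^ (m - d - 1 - ((i : ℕ) - (n - d))) * g) i).natDegree < m + n - d := by
    intro i
    simp only []
    split_ifs with h
    · calc (X ^ (n - d - 1 - (i : ℕ)) * f).natDegree
          ≤ (X ^ (n - d - 1 - (i : ℕ)) : Polynomial K).natDegree + f.natDegree :=
            natDegree_mul_le
        _ = (n - d - 1 - (i : ℕ)) + m := by rw [natDegree_X_pow, hf]
        _ < m + n - d := by omega
    · calc (X ^ (m - d - 1 - ((i : ℕ) - (n - d))) * g).natDegree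
          ≤ (X ^ (m - d - 1 - ((i : ℕ) - (n - d))) : Polynomial K).natDegree + g.natDegree :=
            natDegree_mul_le
        _ = (m - d - 1 - ((i : ℕ) - (n - d))) + n := by rw [natDegree_X_pow, hg]
        _ < m + n - d := by omega
  constructor
  · -- translation
    have hc : X - C α = X + C (-α) := by rw [map_neg, sub_eq_add_neg]
    rw [hc]
    rw [Sres_eq_genDet m n d hm hn (f.comp (X + C (-α))) (g.comp (X + C (-α)))]
    rw [Sres_eq_genDet m n d hm hn f g]
    rw [← genDet_comp_X_add_C (m + n - 2 * d) (m + n - d) hS1 hSN (-α)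
      (fun i : Fin (m + n - 2 * d) =>
        if (i : ℕ) < n - d then X ^ (n - d - 1 - (i : ℕ)) * f
        else X ^ (m - d - 1 - ((i : ℕ) - (n - d))) * g) hdeg]
    rw [funext (rowPoly_comp m n d hm hn f g (-α))]
    have h3 := genDet_rowcomb (m + n - 2 * d) (m + n - d) (Rmat m n d (-α))
      (fun i' : Fin (m + n - 2 * d) =>
        ((if (i' : ℕ) < n - d then X ^ (n - d - 1 - (i' : ℕ)) * f
          else X ^ (m - d - 1 - ((i' : ℕ) - (n - d))) * g).comp (X + C (-α))))
    rw [Rmat_det, map_one, one_mul] at h3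
    exact h3
  · -- scaling
    rw [Sres_eq_genDet m n d hm hn (f.comp (C γ * X)) (g.comp (C γ * X))]
    rw [Sres_eq_genDet m n d hm hn f g]
    set E2 : ℕ := ∑ u ∈ Finset.range (m + n - 2 * d),
      (if u < n - d then n - d - 1 - u else m - d - 1 - (u - (n - d))) with hE2
    have hC2 : (C (γ ^ E2) : Polynomial K) ≠ 0 := by
      simpa using pow_ne_zero E2 hγ
    apply mul_left_cancel₀ hC2
    have hprod : (∏ i : Fin (m + n - 2 * d),
        γ ^ (if (i : ℕ) < n - d then n - d - 1 - (i : ℕ)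
          else m - d - 1 - ((i : ℕ) - (n - d)))) = γ ^ E2 := by
      rw [Fin.prod_univ_eq_prod_range (fun u : ℕ =>
        γ ^ (if u < n - d then n - d - 1 - u else m - d - 1 - (u - (n - d)))) (m + n - 2 * d)]
      rw [Finset.prod_pow_eq_pow_sum]
    have hcomp : ∀ i : Fin (m + n - 2 * d),
        ((if (i : ℕ) < n - d then X ^ (n - d - 1 - (i : ℕ)) * f
          else X ^ (m - d - 1 - ((i : ℕ) - (n - d))) * g).comp (C γ * X))
        = C (γ ^ (if (i : ℕ) < n - d then n - d - 1 - (i : ℕ)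
            else m - d - 1 - ((i : ℕ) - (n - d)))) *
          (if (i : ℕ) < n - d then X ^ (n - d - 1 - (i : ℕ)) * (f.comp (C γ * X))
            else X ^ (m - d - 1 - ((i : ℕ) - (n - d))) * (g.comp (C γ * X))) := by
      intro i
      by_cases h : (i : ℕ) < n - d
      · simp only [if_pos h]
        rw [mul_comp, X_pow_comp, mul_pow, ← C_pow]
        ring
      · simp only [if_neg h]
        rw [mul_comp, X_pow_comp, mul_pow, ← C_pow]
        ring
    calc C (γ ^ E2) * genDet (m + n - 2 * d) (m + n - d)
          (fun i : Fin (m + n - 2 * d) =>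
            if (i : ℕ) < n - d then X ^ (n - d - 1 - (i : ℕ)) * (f.comp (C γ * X))
            else X ^ (m - d - 1 - ((i : ℕ) - (n - d))) * (g.comp (C γ * X)))
        = C (∏ i : Fin (m + n - 2 * d),
            γ ^ (if (i : ℕ) < n - d then n - d - 1 - (i : ℕ)
              else m - d - 1 - ((i : ℕ) - (n - d)))) * genDet (m + n - 2 * d) (m + n - d)
          (fun i : Fin (m + n - 2 * d) =>
            if (i : ℕ) < n - d then X ^ (n - d - 1 - (i : ℕ)) * (f.comp (C γ * X))
            else X ^ (m - d - 1 - ((i : ℕ) - (n - d))) * (g.comp (C γ * X))) := by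
          rw [hprod]
      _ = genDet (m + n - 2 * d) (m + n - d)
          (fun i : Fin (m + n - 2 * d) =>
            C (γ ^ (if (i : ℕ) < n - d then n - d - 1 - (i : ℕ)
              else m - d - 1 - ((i : ℕ) - (n - d)))) *
            (if (i : ℕ) < n - d then X ^ (n - d - 1 - (i : ℕ)) * (f.comp (C γ * X))
              else X ^ (m - d - 1 - ((i : ℕ) - (n - d))) * (g.comp (C γ * X)))) :=
          (genDet_smul_rows (m + n - 2 * d) (m + n - d)
            (fun i : Fin (m + n - 2 * d) =>
              γ ^ (if (i : ℕ) < n - d then n - d - 1 - (i : ℕ)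
                else m - d - 1 - ((i : ℕ) - (n - d))))
            (fun i : Fin (m + n - 2 * d) =>
              if (i : ℕ) < n - d then X ^ (n - d - 1 - (i : ℕ)) * (f.comp (C γ * X))
              else X ^ (m - d - 1 - ((i : ℕ) - (n - d))) * (g.comp (C γ * X)))).symm
      _ = genDet (m + n - 2 * d) (m + n - d)
          (fun i : Fin (m + n - 2 * d) =>
            ((if (i : ℕ) < n - d then X ^ (n - d - 1 - (i : ℕ)) * f
              else X ^ (m - d - 1 - ((i : ℕ) - (n - d))) * g).comp (C γ * X))) := by
          rw [funext hcomp]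
      _ = C (γ ^ (∑ j ∈ Finset.range (m + n - 2 * d - 1), (m + n - d - 1 - j))) *
          (genDet (m + n - 2 * d) (m + n - d)
            (fun i : Fin (m + n - 2 * d) =>
              if (i : ℕ) < n - d then X ^ (n - d - 1 - (i : ℕ)) * f
              else X ^ (m - d - 1 - ((i : ℕ) - (n - d))) * g)).comp (C γ * X) :=
          genDet_comp_C_mul_X (m + n - 2 * d) (m + n - d) hS1 γ
            (fun i : Fin (m + n - 2 * d) =>
              if (i : ℕ) < n - d then X ^ (n - d - 1 - (i : ℕ)) * f
              else X ^ (m - d - 1 - ((i : ℕ) - (n - d))) * g)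
      _ = C (γ ^ E2) * (C (γ ^ (m * n - d * (d + 1))) *
          (genDet (m + n - 2 * d) (m + n - d)
            (fun i : Fin (m + n - 2 * d) =>
              if (i : ℕ) < n - d then X ^ (n - d - 1 - (i : ℕ)) * f
              else X ^ (m - d - 1 - ((i : ℕ) - (n - d))) * g)).comp (C γ * X)) := by
          rw [← sres_arith m n d hm hn, ← hE2, pow_add, C_mul, mul_assoc]
end
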